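/- arXiv:0903.4432 — 6 statements merged into one kernel-verified Lean document; each statement's English description precedes it below -/
import Mathlib

section
/- If x and z are related by z = x(1 - x^h) and A_h denotes the power series satisfying A_h(q)=1+q·A_h(q)^{h+1} with constant term 1, then A_h(z^h) = (1 - x^h)^{-1}, as an identity of formal power series in x. -/
/-- Composition `f ∘ g` of formal power series, valid when `g` has zero
constant term (in that case `coeff n (g^k) = 0` for `k > n`). -/
noncomputable def pscomp {R : Type*} [CommSemiring R] (f g : PowerSeries R) :
    PowerSeries R :=
  PowerSeries.mk fun n =>
    ∑ k ∈ Finset.range (n + 1), PowerSeries.coeff k f * PowerSeries.coeff n (g ^ k)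

/-- The generating function of the generalized Catalan numbers
`A_{h,n} = (1/(hn+1)) * binom((h+1)n, n)`. -/
noncomputable def genCatalanGF (h : ℕ) : PowerSeries ℚ :=
  PowerSeries.mk fun n =>
    (1 / ((h : ℚ) * n + 1)) * (Nat.choose ((h + 1) * n) n : ℚ)

open Finset PowerSeries

namespace FussCat

/-- `c h k r = (r/(hk+r)) * C((h+1)k + r - 1, k)`, the coefficient of `X^k` in `A_h^r`. -/
noncomputable def c (h k r : ℕ) : ℚ :=
  if k = 0 then 1 else (r : ℚ) / ((h : ℚ) * k + r) * (((h + 1) * k + r - 1).choose k : ℚ)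

lemma c_zero (h r : ℕ) : c h 0 r = 1 := if_pos rfl

lemma c_succ (h j r : ℕ) :
    c h (j + 1) r =
      (r : ℚ) / ((h : ℚ) * ((j : ℚ) + 1) + r) * (((h + 1) * j + h + r).choose (j + 1) : ℚ) := by
  have e : (h + 1) * (j + 1) + r - 1 = (h + 1) * j + h + r := by
    rw [show (h + 1) * (j + 1) + r = ((h + 1) * j + h + r) + 1 from by ring]
    simp

  rw [c, if_neg (Nat.succ_ne_zero j), e]
  push_cast
  ring

lemma c_succ_zero (h j : ℕ) : c h (j + 1) 0 = 0 := by
  rw [c_succ]; simp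

/-- The fundamental recurrence `c(k, r) = c(k, r-1) + c(k-1, r+h)`. -/
lemma c_rec (h : ℕ) (hh : 0 < h) (j s : ℕ) :
    c h (j + 1) (s + 1) = c h (j + 1) s + c h j (s + h + 1) := by
  have hcj : c h j (s + h + 1) =
      ((s : ℚ) + (h : ℚ) + 1) / ((h : ℚ) * ((j : ℚ) + 1) + (s : ℚ) + 1) *
        (((h + 1) * j + h + s).choose j : ℚ) := by
    cases j with
    | zero =>
        rw [c_zero]
        have hne : ((h : ℚ) * ((0 : ℕ) + 1 : ℚ) + (s : ℚ) + 1) ≠ 0 := by push_cast; positivity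
        simp only [Nat.choose_zero_right, Nat.cast_one, mul_one]
        rw [eq_comm, div_eq_one_iff_eq hne]
        push_cast; ring
    | succ i =>
        rw [c_succ]
        have e1 : ((h + 1) * i + h + (s + h + 1)) = ((h + 1) * (i + 1) + h + s) := by ring
        rw [e1]
        push_cast
        ring_nf
  rw [hcj, c_succ, c_succ]
  set T := (h + 1) * j + h + s with hT
  have hPascal : ((T + 1).choose (j + 1) : ℚ) = (T.choose j : ℚ) + (T.choose (j + 1) : ℚ) := by
    rw [Nat.choose_succ_succ]; push_cast; ring
  have hTj : T - j = h * (j + 1) + s := by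
    have : T = h * (j + 1) + s + j := by rw [hT]; ring
    omega
  have hABnat : T.choose (j + 1) * (j + 1) = T.choose j * (h * (j + 1) + s) := by
    rw [Nat.choose_succ_right_eq, hTj]
  have hAB : (T.choose (j + 1) : ℚ) * ((j : ℚ) + 1) =
      (T.choose j : ℚ) * ((h : ℚ) * ((j : ℚ) + 1) + (s : ℚ)) := by
    exact_mod_cast congrArg (Nat.cast (R := ℚ)) hABnat
  have eT : (h + 1) * j + h + (s + 1) = T + 1 := by rw [hT]; ring
  rw [eT, hPascal]
  have hq1 : ((h : ℚ) * ((j : ℚ) + 1) + ((s : ℚ) + 1)) ≠ 0 := by positivity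
  have hq : ((h : ℚ) * ((j : ℚ) + 1) + (s : ℚ)) ≠ 0 := by
    have : (0 : ℚ) < (h : ℚ) * ((j : ℚ) + 1) + (s : ℚ) := by
      have h1 : (1 : ℚ) ≤ (h : ℚ) := by exact_mod_cast hh
      nlinarith [Nat.cast_nonneg (α := ℚ) j, Nat.cast_nonneg (α := ℚ) s]
    exact ne_of_gt this
  push_cast
  field_simp
  linear_combination ((h : ℚ) * ((h : ℚ) * ((j : ℚ) + 1) + (s : ℚ) + 1)) * hAB

end FussCat

namespace FussCat

/-- `S h r n = ∑_k (-1)^{n-k} C(hk+r, n-k) c(h,k,r)`, the coefficient of `x^{hn}`-block in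
`(1-x^h)^r A_h^r((x(1-x^h))^h)`. -/
noncomputable def S (h r n : ℕ) : ℚ :=
  ∑ k ∈ range (n + 1), (-1 : ℚ) ^ (n - k) * ((h * k + r).choose (n - k) : ℚ) * c h k r

lemma S_n_zero (h r : ℕ) : S h r 0 = 1 := by
  simp [S, c_zero]

lemma S_r_zero (h n : ℕ) (hn : 0 < n) : S h 0 n = 0 := by
  apply Finset.sum_eq_zero
  intro k hk
  cases k with
  | zero => simp [Nat.choose_eq_zero_of_lt hn]
  | succ j => rw [c_succ_zero]; ring

lemma S_rec (h : ℕ) (hh : 0 < h) (r m : ℕ) :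
    S h (r + 1) (m + 1) = S h r (m + 1) - S h r m + S h (r + h + 1) m := by
  have hsplit : ∀ k, c h k (r + 1) = c h k r + (if k = 0 then 0 else c h (k - 1) (r + h + 1)) := by
    intro k
    cases k with
    | zero => simp [c_zero]
    | succ j => simpa using c_rec h hh j r
  have hL : S h (r + 1) (m + 1) =
      ∑ k ∈ range (m + 2), (-1 : ℚ) ^ (m + 1 - k) * ((h * k + (r + 1)).choose (m + 1 - k) : ℚ) *
        c h k (r + 1) := rfl
  have expand :
      (∑ k ∈ range (m + 2), (-1 : ℚ) ^ (m + 1 - k) * ((h * k + (r + 1)).choose (m + 1 - k) : ℚ) *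
        c h k (r + 1)) =
      (∑ k ∈ range (m + 2), (-1 : ℚ) ^ (m + 1 - k) * ((h * k + (r + 1)).choose (m + 1 - k) : ℚ) *
        c h k r) +
      (∑ k ∈ range (m + 2), (-1 : ℚ) ^ (m + 1 - k) * ((h * k + (r + 1)).choose (m + 1 - k) : ℚ) *
        (if k = 0 then 0 else c h (k - 1) (r + h + 1))) := by
    rw [← Finset.sum_add_distrib]
    apply Finset.sum_congr rfl
    intro k _
    rw [hsplit k]; ring
  have hSum2 : (∑ k ∈ range (m + 2), (-1 : ℚ) ^ (m + 1 - k) *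
      ((h * k + (r + 1)).choose (m + 1 - k) : ℚ) * (if k = 0 then 0 else c h (k - 1) (r + h + 1))) =
      S h (r + h + 1) m := by
    rw [Finset.sum_range_succ']
    norm_num
    apply Finset.sum_congr rfl
    intro i _
    have e1 : m + 1 - (i + 1) = m - i := by omega
    have e2 : h * (i + 1) + (r + 1) = h * i + (r + h + 1) := by ring
    rw [e1, e2]
  have hSum1 : (∑ k ∈ range (m + 2), (-1 : ℚ) ^ (m + 1 - k) *
      ((h * k + (r + 1)).choose (m + 1 - k) : ℚ) * c h k r) = S h r (m + 1) - S h r m := by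
    rw [Finset.sum_range_succ]
    have hlast : (-1 : ℚ) ^ (m + 1 - (m + 1)) *
        ((h * (m + 1) + (r + 1)).choose (m + 1 - (m + 1)) : ℚ) * c h (m + 1) r = c h (m + 1) r := by
      simp
    rw [hlast]
    have hterm : ∀ k ∈ range (m + 1),
        (-1 : ℚ) ^ (m + 1 - k) * ((h * k + (r + 1)).choose (m + 1 - k) : ℚ) * c h k r =
        ((-1 : ℚ) ^ (m + 1 - k) * ((h * k + r).choose (m + 1 - k) : ℚ) * c h k r) +
        (-((-1 : ℚ) ^ (m - k) * ((h * k + r).choose (m - k) : ℚ) * c h k r)) := by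
      intro k hk
      have hkm : k ≤ m := by simpa [Nat.lt_succ_iff] using hk
      have e1 : m + 1 - k = (m - k) + 1 := by omega
      have e2 : h * k + (r + 1) = (h * k + r) + 1 := by ring
      rw [e1, e2, Nat.choose_succ_succ]
      push_cast
      rw [pow_succ]
      ring
    rw [Finset.sum_congr rfl hterm, Finset.sum_add_distrib]
    have hRA : S h r (m + 1) = (∑ k ∈ range (m + 1),
        (-1 : ℚ) ^ (m + 1 - k) * ((h * k + r).choose (m + 1 - k) : ℚ) * c h k r) +
        c h (m + 1) r := by
      rw [S, Finset.sum_range_succ]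
      simp
    have hRB : S h r m = ∑ k ∈ range (m + 1),
        (-1 : ℚ) ^ (m - k) * ((h * k + r).choose (m - k) : ℚ) * c h k r := rfl
    rw [hRA, hRB, Finset.sum_neg_distrib]
    ring
  rw [hL, expand, hSum2, hSum1]

end FussCat

namespace FussCat

lemma S_eq_zero (h : ℕ) (hh : 0 < h) : ∀ n, 0 < n → ∀ r, S h r n = 0 := by
  intro n
  induction n using Nat.strong_induction_on with
  | _ n IH =>
    intro hn r
    obtain ⟨m, rfl⟩ : ∃ m, n = m + 1 := ⟨n - 1, by omega⟩
    clear hn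
    induction r with
    | zero => exact S_r_zero h (m + 1) (Nat.succ_pos m)
    | succ r IHr =>
      rw [S_rec h hh r m, IHr]
      have hsame : ∀ r', S h r' m = S h (r + h + 1) m := by
        intro r'
        cases m with
        | zero => rw [S_n_zero, S_n_zero]
        | succ m' =>
          rw [IH (m' + 1) (by omega) (Nat.succ_pos m') r',
            IH (m' + 1) (by omega) (Nat.succ_pos m') (r + h + 1)]
      rw [hsame r]
      ring

/-- `P h n = ∑_k (-1)^{n-k} C(hk, n-k) c(h,k,1)`, the coefficient of `x^{hn}` in
`A_h((x(1-x^h))^h)`. -/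
noncomputable def P (h n : ℕ) : ℚ :=
  ∑ k ∈ range (n + 1), (-1 : ℚ) ^ (n - k) * ((h * k).choose (n - k) : ℚ) * c h k 1

lemma P_succ (h m : ℕ) : P h (m + 1) = P h m + S h 1 (m + 1) := by
  have hS : S h 1 (m + 1) =
      ∑ k ∈ range (m + 2), (-1 : ℚ) ^ (m + 1 - k) * ((h * k + 1).choose (m + 1 - k) : ℚ) *
        c h k 1 := rfl
  have hterm : ∀ k ∈ range (m + 1),
      (-1 : ℚ) ^ (m + 1 - k) * ((h * k + 1).choose (m + 1 - k) : ℚ) * c h k 1 =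
      ((-1 : ℚ) ^ (m + 1 - k) * ((h * k).choose (m + 1 - k) : ℚ) * c h k 1) +
      (-((-1 : ℚ) ^ (m - k) * ((h * k).choose (m - k) : ℚ) * c h k 1)) := by
    intro k hk
    have hkm : k ≤ m := by simpa [Nat.lt_succ_iff] using hk
    have e1 : m + 1 - k = (m - k) + 1 := by omega
    rw [e1, Nat.choose_succ_succ]
    push_cast
    rw [pow_succ]
    ring
  rw [hS, Finset.sum_range_succ, Finset.sum_congr rfl hterm, Finset.sum_add_distrib]
  have hlast : (-1 : ℚ) ^ (m + 1 - (m + 1)) *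
      ((h * (m + 1) + 1).choose (m + 1 - (m + 1)) : ℚ) * c h (m + 1) 1 = c h (m + 1) 1 := by
    simp
  have hPA : P h (m + 1) = (∑ k ∈ range (m + 1),
      (-1 : ℚ) ^ (m + 1 - k) * ((h * k).choose (m + 1 - k) : ℚ) * c h k 1) + c h (m + 1) 1 := by
    rw [P, Finset.sum_range_succ]
    simp
  have hPB : P h m = ∑ k ∈ range (m + 1),
      (-1 : ℚ) ^ (m - k) * ((h * k).choose (m - k) : ℚ) * c h k 1 := rfl
  rw [hlast, hPA, hPB, Finset.sum_neg_distrib]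
  ring

lemma P_eq_one (h : ℕ) (hh : 0 < h) (n : ℕ) : P h n = 1 := by
  induction n with
  | zero => simp [P, c_zero]
  | succ m IH => rw [P_succ, IH, S_eq_zero h hh (m + 1) (Nat.succ_pos m), add_zero]

end FussCat

namespace FussCat

lemma coeff_A (h k : ℕ) : PowerSeries.coeff k (genCatalanGF h) = c h k 1 := by
  rw [genCatalanGF, PowerSeries.coeff_mk]
  cases k with
  | zero => simp [c_zero]
  | succ j =>
    rw [c, if_neg (Nat.succ_ne_zero j)]
    have e : (h + 1) * (j + 1) + 1 - 1 = (h + 1) * (j + 1) := by omega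
    rw [e]
    push_cast
    ring

lemma coeffQpow (h N t : ℕ) (hh : 0 < h) :
    PowerSeries.coeff t ((1 - PowerSeries.X ^ h) ^ N) =
      if h ∣ t then (-1 : ℚ) ^ (t / h) * (N.choose (t / h) : ℚ) else 0 := by
  have hexp : ((1 : ℚ⟦X⟧) - X ^ h) ^ N = (-(X ^ h) + 1) ^ N := by ring
  rw [hexp, add_pow]
  rw [map_sum]
  have hterm : ∀ j ∈ range (N + 1),
      PowerSeries.coeff t ((-(X ^ h : ℚ⟦X⟧)) ^ j * 1 ^ (N - j) * (N.choose j : ℚ⟦X⟧)) =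
      if t = h * j then (-1 : ℚ) ^ j * (N.choose j : ℚ) else 0 := by
    intro j _
    rw [one_pow, mul_one]
    have hrw : (-(X ^ h : ℚ⟦X⟧)) ^ j * (N.choose j : ℚ⟦X⟧) =
        PowerSeries.C ((-1 : ℚ) ^ j * (N.choose j : ℚ)) * (X ^ (h * j) : ℚ⟦X⟧) := by
      rw [neg_pow, ← pow_mul, map_mul, map_pow, map_neg, map_one, map_natCast]
      ring
    rw [hrw, PowerSeries.coeff_C_mul, PowerSeries.coeff_X_pow]
    by_cases he : t = h * j <;> simp [he]
  rw [Finset.sum_congr rfl hterm]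
  by_cases hd : h ∣ t
  · obtain ⟨u, rfl⟩ := hd
    have hu : (h * u) / h = u := by
      rw [Nat.mul_div_cancel_left _ hh]
    rw [hu, if_pos ⟨u, rfl⟩]
    have hiff : ∀ j, (h * u = h * j) ↔ (j = u) := by
      intro j
      constructor
      · intro he; exact (Nat.eq_of_mul_eq_mul_left hh he).symm
      · rintro rfl; rfl
    have hcg : ∀ j ∈ range (N + 1),
        (if h * u = h * j then (-1 : ℚ) ^ j * (N.choose j : ℚ) else 0) =
        if j = u then (-1 : ℚ) ^ j * (N.choose j : ℚ) else 0 := by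
      intro j _
      rw [if_congr (hiff j) rfl rfl]
    rw [Finset.sum_congr rfl hcg, Finset.sum_ite_eq' (range (N + 1))]
    by_cases hu2 : u ∈ range (N + 1)
    · rw [if_pos hu2]
    · rw [if_neg hu2]
      have : N.choose u = 0 := by
        apply Nat.choose_eq_zero_of_lt
        simpa [Nat.lt_succ_iff] using hu2
      simp [this]
  · rw [if_neg hd]
    apply Finset.sum_eq_zero
    intro j _
    rw [if_neg]
    intro he
    exact hd ⟨j, he⟩

lemma coeff_F (h : ℕ) (hh : 0 < h) (m : ℕ) :
    PowerSeries.coeff m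
        (pscomp (genCatalanGF h) ((PowerSeries.X * (1 - PowerSeries.X ^ h)) ^ h)) =
      if h ∣ m then P h (m / h) else 0 := by
  rw [pscomp, PowerSeries.coeff_mk]
  have hcoeffG : ∀ k, PowerSeries.coeff m (((PowerSeries.X * (1 - PowerSeries.X ^ h)) ^ h) ^ k) =
      if h * k ≤ m then
        (if h ∣ (m - h * k) then
          (-1 : ℚ) ^ ((m - h * k) / h) * (((h * k).choose ((m - h * k) / h)) : ℚ) else 0)
      else 0 := by
    intro k
    have hGpow : ((PowerSeries.X * (1 - PowerSeries.X ^ h)) ^ h) ^ k =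
        (1 - PowerSeries.X ^ h) ^ (h * k) * (PowerSeries.X : ℚ⟦X⟧) ^ (h * k) := by
      rw [← pow_mul, mul_pow, mul_comm ((PowerSeries.X : ℚ⟦X⟧) ^ (h * k))]
    rw [hGpow, PowerSeries.coeff_mul_X_pow']
    by_cases hle : h * k ≤ m
    · rw [if_pos hle, if_pos hle, coeffQpow h (h * k) (m - h * k) hh]
    · rw [if_neg hle, if_neg hle]
  by_cases hd : h ∣ m
  · obtain ⟨n, rfl⟩ := hd
    rw [if_pos ⟨n, rfl⟩, Nat.mul_div_cancel_left _ hh]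
    have hsub : range (n + 1) ⊆ range (h * n + 1) := by
      apply Finset.range_subset_range.2
      have : n ≤ h * n := Nat.le_mul_of_pos_left n hh
      omega
    rw [← Finset.sum_subset hsub ?van]
    case van =>
      intro k hk1 hk2
      have hkn : n < k := by
        simp only [Finset.mem_range, Nat.lt_succ_iff] at hk1 hk2
        omega
      have hnle : ¬ (h * k ≤ h * n) := by
        intro hle
        exact absurd (Nat.le_of_mul_le_mul_left hle hh) (by omega)
      rw [hcoeffG k, if_neg hnle, mul_zero]
    rw [P]
    apply Finset.sum_congr rfl
    intro k hk
    have hkn : k ≤ n := by simpa [Nat.lt_succ_iff] using hk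
    obtain ⟨d, rfl⟩ : ∃ d, n = k + d := ⟨n - k, by omega⟩
    have hle : h * k ≤ h * (k + d) := Nat.mul_le_mul_left h (by omega)
    have hsubeq : h * (k + d) - h * k = h * d := by
      have : h * (k + d) = h * k + h * d := by ring
      omega
    have hdvd : h ∣ (h * (k + d) - h * k) := by rw [hsubeq]; exact ⟨d, rfl⟩
    have hdiv : (h * (k + d) - h * k) / h = d := by
      rw [hsubeq, Nat.mul_div_cancel_left _ hh]
    have hnk : k + d - k = d := by omega
    rw [coeff_A, hcoeffG k, if_pos hle, if_pos hdvd, hdiv, hnk]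
    ring
  · rw [if_neg hd]
    apply Finset.sum_eq_zero
    intro k _
    rw [coeff_A, hcoeffG k]
    by_cases hle : h * k ≤ m
    · rw [if_pos hle, if_neg, mul_zero]
      intro hdd
      obtain ⟨u, hu⟩ := hdd
      exact hd ⟨k + u, by rw [Nat.mul_add]; omega⟩
    · rw [if_neg hle, mul_zero]

end FussCat


/-- With `z = x (1 - x^h)`, one has `A_h(z^h) = (1 - x^h)⁻¹` as formal power
series in `x`, i.e. `A_h(z^h) * (1 - x^h) = 1`. -/
theorem genCatalanGF_parametric (h : ℕ) (hh : 0 < h) :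
    pscomp (genCatalanGF h) ((PowerSeries.X * (1 - PowerSeries.X ^ h)) ^ h) *
      (1 - PowerSeries.X ^ h) = 1 := by
  set F := pscomp (genCatalanGF h) ((PowerSeries.X * (1 - PowerSeries.X ^ h)) ^ h) with hF
  apply PowerSeries.ext
  intro m
  have hrw : F * (1 - PowerSeries.X ^ h) = F - F * PowerSeries.X ^ h := by ring
  rw [hrw, map_sub, PowerSeries.coeff_mul_X_pow', PowerSeries.coeff_one]
  rcases Nat.eq_zero_or_pos m with hm | hm
  · subst hm
    rw [if_pos rfl, if_neg (show ¬ h ≤ 0 by omega), FussCat.coeff_F h hh 0,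
      if_pos (dvd_zero h)]
    rw [show (0 : ℕ) / h = 0 from Nat.zero_div h, FussCat.P_eq_one h hh 0]
    ring
  · rw [if_neg (show ¬ m = 0 by omega)]
    by_cases hd : h ∣ m
    · obtain ⟨n, rfl⟩ := hd
      have hn : 0 < n := by
        rcases Nat.eq_zero_or_pos n with rfl | hn
        · simp at hm
        · exact hn
      have hhm : h ≤ h * n := Nat.le_mul_of_pos_right h hn
      rw [if_pos hhm, FussCat.coeff_F h hh (h * n), if_pos ⟨n, rfl⟩,
        Nat.mul_div_cancel_left _ hh, FussCat.P_eq_one h hh n]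
      obtain ⟨n', rfl⟩ : ∃ n', n = n' + 1 := ⟨n - 1, by omega⟩
      have hsub : h * (n' + 1) - h = h * n' := by
        have : h * (n' + 1) = h * n' + h := by ring
        omega
      rw [FussCat.coeff_F h hh (h * (n' + 1) - h), hsub, if_pos ⟨n', rfl⟩,
        Nat.mul_div_cancel_left _ hh, FussCat.P_eq_one h hh n']
      ring
    · rw [FussCat.coeff_F h hh m, if_neg hd]
      by_cases hle : h ≤ m
      · rw [if_pos hle, FussCat.coeff_F h hh (m - h), if_neg]
        · ring
        · intro hdd
          obtain ⟨u, hu⟩ := hdd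
          exact hd ⟨u + 1, by rw [Nat.mul_add]; omega⟩
      · rw [if_neg hle]
        ring
end

section
/- The radius of convergence of the generalized Catalan generating function A_h(q) = Σ_n (1/(hn+1))·binom((h+1)n,n)·q^n equals h^h/(h+1)^{h+1}, and at this value the series converges to (h+1)/h. -/
noncomputable def gcR (h t n : ℕ) : ℝ :=
  if t = 0 ∧ n = 0 then 1
  else (t : ℝ) / (((h+1)*n + t : ℕ) : ℝ) * (Nat.choose ((h+1)*n + t) n : ℝ)

lemma gcR_eq (h t n : ℕ) (hn : ¬ (t = 0 ∧ n = 0)) :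
    gcR h t n = (t : ℝ) / (((h+1)*n + t : ℕ) : ℝ) * (Nat.choose ((h+1)*n + t) n : ℝ) := by
  rw [gcR, if_neg hn]

lemma gcR_zero_right (h t : ℕ) : gcR h t 0 = 1 := by
  rcases Nat.eq_zero_or_pos t with ht | ht
  · simp [gcR, ht]
  · have ht' : t ≠ 0 := ht.ne'
    rw [gcR_eq h t 0 (by simp [ht'])]
    simp [div_self (show ((t:ℕ):ℝ) ≠ 0 by exact_mod_cast ht')]

lemma gcR_zero_left (h n : ℕ) (hn : n ≠ 0) : gcR h 0 n = 0 := by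
  rw [gcR_eq h 0 n (by simp [hn])]; simp

lemma gcR_nonneg (h t n : ℕ) : 0 ≤ gcR h t n := by
  rw [gcR]; split
  · norm_num
  · positivity
lemma gcR_rec (h t n : ℕ) :
    gcR h (t+1) (n+1) = gcR h t (n+1) + gcR h (t+1+h) n := by
  have e1 : (h+1)*(n+1) + (t+1) = ((h+1)*(n+1) + t) + 1 := by ring
  have e2 : (h+1)*n + (t+1+h) = (h+1)*(n+1) + t := by ring
  rw [gcR_eq h (t+1) (n+1) (by simp), gcR_eq h t (n+1) (by simp),
    gcR_eq h (t+1+h) n (by simp), e1, e2]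
  set M := (h+1)*(n+1) + t with hM
  have hnM : n + 1 ≤ M := by
    have : n + 1 ≤ (h+1)*(n+1) := Nat.le_mul_of_pos_left _ (Nat.succ_pos h)
    omega
  have pascal : (Nat.choose (M+1) (n+1) : ℝ) =
      (Nat.choose M n : ℝ) + (Nat.choose M (n+1) : ℝ) := by
    rw [Nat.choose_succ_succ M n]; push_cast; ring
  have hx : ((n:ℝ)+1) * (Nat.choose M (n+1) : ℝ) = ((M:ℝ) - n) * (Nat.choose M n : ℝ) := by
    have := Nat.choose_succ_right_eq M n
    have hcast : ((M - n : ℕ) : ℝ) = (M:ℝ) - n := by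
      rw [Nat.cast_sub (by omega)]
    calc ((n:ℝ)+1) * (Nat.choose M (n+1) : ℝ)
        = ((Nat.choose M (n+1) * (n+1) : ℕ) : ℝ) := by push_cast; ring
      _ = ((Nat.choose M n * (M - n) : ℕ) : ℝ) := by rw [this]
      _ = ((M:ℝ) - n) * (Nat.choose M n : ℝ) := by push_cast [hcast]; ring
  have hMr : (M:ℝ) = (h+1)*((n:ℝ)+1) + t := by rw [hM]; push_cast; ring
  have hM0 : (M:ℝ) ≠ 0 := by
    have : 0 < M := by omega
    exact_mod_cast this.ne'
  have hM1 : ((M:ℝ)+1) ≠ 0 := by positivity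
  rw [pascal]
  rw [div_mul_eq_mul_div, div_mul_eq_mul_div, div_mul_eq_mul_div,
    div_add_div _ _ hM0 hM0, div_eq_div_iff (show ((M+1:ℕ):ℝ) ≠ 0 by push_cast; positivity)
      (mul_ne_zero hM0 hM0)]
  push_cast
  linear_combination (((h:ℝ)+1) * (M:ℝ)) * hx +
    (((Nat.choose M n : ℝ) + (Nat.choose M (n+1) : ℝ)) * (M:ℝ)) * hMr
lemma gc_keylem (A n : ℕ) :
    (A+1) * Nat.choose (A+n+1) n = (A+n+1) * Nat.choose (A+n) n := by
  have h1 : Nat.choose (A+n+1) (A+n+1-n) = Nat.choose (A+n+1) n :=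
    Nat.choose_symm (by omega)
  have e1 : A+n+1-n = A+1 := by omega
  rw [e1] at h1
  have h2 := Nat.add_one_mul_choose_eq (A+n) A
  have h3 : Nat.choose (A+n) (A+n-A) = Nat.choose (A+n) A :=
    Nat.choose_symm (by omega)
  have e2 : A+n-A = n := by omega
  rw [e2] at h3
  rw [← h1, h3, h2]; ring

lemma gcR_one (h n : ℕ) :
    gcR h 1 n = 1 / ((h:ℝ) * n + 1) * (Nat.choose ((h+1)*n) n : ℝ) := by
  have e : (h+1)*n = h*n + n := by ring
  have key := gc_keylem (h*n) n
  rw [gcR_eq h 1 n (by simp), e]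
  have hd1 : ((h:ℝ)*n+1) ≠ 0 := by positivity
  have hd2 : ((h*n+n+1 : ℕ) : ℝ) ≠ 0 := by positivity
  rw [div_mul_eq_mul_div, div_mul_eq_mul_div, div_eq_div_iff hd2 hd1]
  have := congrArg (fun z : ℕ => (z : ℝ)) key
  push_cast at this ⊢
  linear_combination this

lemma gcR_shift (h n : ℕ) : gcR h (h+1) n = gcR h 1 (n+1) := by
  have e1 : (h+1)*n + (h+1) = h*n+h+n+1 := by ring
  have e3 : (h+1)*(n+1) = h*n+h+n+1 := by ring
  rw [gcR_one h (n+1), gcR_eq h (h+1) n (by simp), e1, e3]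
  have key := Nat.choose_succ_right_eq (h*n+h+n+1) n
  have e4 : h*n+h+n+1-n = h*n+h+1 := by omega
  rw [e4] at key
  have hd1 : ((h*n+h+n+1 : ℕ) : ℝ) ≠ 0 := by positivity
  have hd2 : ((h:ℝ)*((n:ℕ)+1:ℕ)+1) ≠ 0 := by positivity
  rw [div_mul_eq_mul_div, div_mul_eq_mul_div, div_eq_div_iff hd1 hd2]
  have := congrArg (fun z : ℕ => (z : ℝ)) key
  push_cast at this ⊢
  linear_combination (-((h:ℝ)+1)) * this

lemma gcR_conv (h : ℕ) : ∀ n t, (∑ k ∈ Finset.range (n+1), gcR h 1 k * gcR h t (n-k)) = gcR h (t+1) n := by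
  intro n
  induction n with
  | zero => intro t; simp [gcR_zero_right]
  | succ n IH =>
    intro t
    induction t with
    | zero =>
      rw [Finset.sum_eq_single_of_mem (n+1) (Finset.self_mem_range_succ _)]
      · simp [gcR_zero_right]
      · intro k hk hne
        have hk' : k ≤ n := by
          have := Finset.mem_range.mp hk; omega
        rw [gcR_zero_left h _ (by omega), mul_zero]
    | succ t IH2 =>
      rw [Finset.sum_range_succ, Nat.sub_self, gcR_zero_right, mul_one]
      have hA : (∑ k ∈ Finset.range (n+1), gcR h 1 k * gcR h (t+1) (n+1-k))
          = (∑ k ∈ Finset.range (n+1), gcR h 1 k * gcR h t (n+1-k))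
            + (∑ k ∈ Finset.range (n+1), gcR h 1 k * gcR h (t+1+h) (n-k)) := by
        rw [← Finset.sum_add_distrib]
        apply Finset.sum_congr rfl
        intro k hk
        have hk' : k ≤ n := by have := Finset.mem_range.mp hk; omega
        have e : n+1-k = (n-k)+1 := by omega
        rw [e, gcR_rec h t (n-k), ← e, mul_add]
      have hfirst : (∑ k ∈ Finset.range (n+1), gcR h 1 k * gcR h t (n+1-k))
          = gcR h (t+1) (n+1) - gcR h 1 (n+1) := by
        rw [Finset.sum_range_succ, Nat.sub_self, gcR_zero_right, mul_one] at IH2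
        linarith
      have hsecond := IH (t+1+h)
      have e5 : t+1+h+1 = t+1+1+h := by ring
      rw [hA, hfirst, hsecond, e5]
      have := gcR_rec h (t+1) n
      linarith
lemma gc_sum_pow (hth N : ℕ) :
    (∑ k ∈ Finset.range (N+1), Nat.choose N k * hth^(N-k)) = (1+hth)^N := by
  rw [add_pow]
  apply Finset.sum_congr rfl
  intro k hk
  simp [mul_comm]

lemma gc_upper (h n : ℕ) :
    Nat.choose (h*n+n) n * h^(h*n) ≤ (1+h)^(h*n+n) := by
  rw [← gc_sum_pow h (h*n+n)]
  have hmem : n ∈ Finset.range (h*n+n+1) := by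
    apply Finset.mem_range.mpr; omega
  have e : Nat.choose (h*n+n) n * h^(h*n+n-n) = Nat.choose (h*n+n) n * h^(h*n) := by
    congr 2; omega
  rw [← e]
  exact Finset.single_le_sum (f := fun k => Nat.choose (h*n+n) k * h^(h*n+n-k))
    (fun k _ => Nat.zero_le _) hmem

def gcG (h n k : ℕ) : ℕ := Nat.choose (h*n+n) k * h^(h*n+n-k)

lemma gcG_step_up (h n : ℕ) (hh : 0 < h) (k : ℕ) (hk : k < n) :
    gcG h n k ≤ gcG h n (k+1) := by
  set N := h*n+n with hN
  have hkN : k + 1 ≤ N := by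
    have hh1 : 1*n ≤ h*n := Nat.mul_le_mul_right n hh
    omega
  have key : Nat.choose N (k+1) * (k+1) = Nat.choose N k * (N - k) :=
    Nat.choose_succ_right_eq N k
  have e : N - k = (N - (k+1)) + 1 := by omega
  have key2 : (k+1) * gcG h n k ≤ (k+1) * gcG h n (k+1) := by
    calc (k+1) * gcG h n k = Nat.choose N k * (k+1) * h^(N-k) := by
          unfold gcG; ring
      _ ≤ Nat.choose N k * (N - k) * h^(N-(k+1)) := by
          rw [e, pow_succ]
          have hbound : (k+1) * h ≤ (N - (k+1)) + 1 := by
            have h1 : h*(k+1) ≤ h*n := Nat.mul_le_mul_left h hk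
            have h2 : (k+1)*h = h*(k+1) := Nat.mul_comm _ _
            omega
          calc Nat.choose N k * (k+1) * (h^(N-(k+1)) * h)
              = Nat.choose N k * ((k+1)*h) * h^(N-(k+1)) := by ring
            _ ≤ Nat.choose N k * ((N - (k+1)) + 1) * h^(N-(k+1)) := by
                exact Nat.mul_le_mul_right _ (Nat.mul_le_mul_left _ hbound)
      _ = (k+1) * gcG h n (k+1) := by
          unfold gcG; rw [← key]; ring
  exact Nat.le_of_mul_le_mul_left key2 (by omega)

lemma gcG_step_down (h n : ℕ) (hh : 0 < h) (k : ℕ) (hk : n ≤ k) :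
    gcG h n (k+1) ≤ gcG h n k := by
  set N := h*n+n with hN
  by_cases hkN : N ≤ k
  · have hz : Nat.choose N (k+1) = 0 := Nat.choose_eq_zero_of_lt (by omega)
    unfold gcG; rw [hz]; simp
  · push_neg at hkN
    have key : Nat.choose N (k+1) * (k+1) = Nat.choose N k * (N - k) :=
      Nat.choose_succ_right_eq N k
    have e : N - k = (N - (k+1)) + 1 := by omega
    have key2 : (k+1) * gcG h n (k+1) ≤ (k+1) * gcG h n k := by
      calc (k+1) * gcG h n (k+1) = Nat.choose N k * (N-k) * h^(N-(k+1)) := by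
            unfold gcG; rw [← key]; ring
        _ ≤ Nat.choose N k * ((k+1)*h) * h^(N-(k+1)) := by
            have hbound : N - k ≤ (k+1) * h := by
              have h1 : h*n ≤ h*k := Nat.mul_le_mul_left h hk
              have h2 : h*k ≤ h*(k+1) := Nat.mul_le_mul_left h (by omega)
              have h3 : (k+1)*h = h*(k+1) := Nat.mul_comm _ _
              omega
            exact Nat.mul_le_mul_right _ (Nat.mul_le_mul_left _ hbound)
        _ = Nat.choose N k * (k+1) * (h^(N-(k+1)) * h) := by ring
        _ = (k+1) * gcG h n k := by
            unfold gcG; rw [e, pow_succ]; ring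
    exact Nat.le_of_mul_le_mul_left key2 (by omega)

lemma gcG_le_mode (h n : ℕ) (hh : 0 < h) : ∀ k, gcG h n k ≤ gcG h n n := by
  have up : ∀ d, gcG h n (n - d) ≤ gcG h n n := by
    intro d
    induction d with
    | zero => simp
    | succ d IH =>
      by_cases hc : d + 1 ≤ n
      · have e : n - d = (n - (d+1)) + 1 := by omega
        have step := gcG_step_up h n hh (n - (d+1)) (by omega)
        rw [← e] at step
        exact step.trans IH
      · have e : n - (d+1) = n - d := by omega
        rw [e]; exact IH
  have down : ∀ k, n ≤ k → gcG h n k ≤ gcG h n n := by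
    intro k
    induction k with
    | zero =>
      intro hk
      have : n = 0 := Nat.le_zero.mp hk
      rw [this]
    | succ k IH =>
      intro hk
      by_cases hc : n ≤ k
      · exact (gcG_step_down h n hh k hc).trans (IH hc)
      · have hnk : n = k+1 := by omega
        rw [← hnk]
  intro k
  by_cases hkn : k ≤ n
  · have e : k = n - (n - k) := by omega
    rw [e]; exact up (n-k)
  · exact down k (by omega)

lemma gc_lower (h n : ℕ) (hh : 0 < h) :
    (1+h)^(h*n+n) ≤ (h*n+n+1) * (Nat.choose (h*n+n) n * h^(h*n)) := by
  rw [← gc_sum_pow h (h*n+n)]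
  have e : Nat.choose (h*n+n) n * h^(h*n) = gcG h n n := by
    unfold gcG; congr 2; omega
  rw [e]
  calc (∑ k ∈ Finset.range (h*n+n+1), Nat.choose (h*n+n) k * h^(h*n+n-k))
      ≤ ∑ _k ∈ Finset.range (h*n+n+1), gcG h n n :=
        Finset.sum_le_sum (fun k _ => gcG_le_mode h n hh k)
    _ = (h*n+n+1) * gcG h n n := by
        rw [Finset.sum_const, Finset.card_range]; ring

noncomputable def gcA (h : ℕ) (n : ℕ) : ℝ :=
  1 / ((h:ℝ) * n + 1) * (Nat.choose ((h+1)*n) n : ℝ)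

noncomputable def gcr (h : ℕ) : ℝ := (h:ℝ)^h / ((h:ℝ)+1)^(h+1)

lemma gcA_eq (h n : ℕ) : gcA h n = gcR h 1 n := (gcR_one h n).symm

lemma gcA_nonneg (h n : ℕ) : 0 ≤ gcA h n := by
  unfold gcA; positivity

lemma gcr_pos (h : ℕ) (hh : 0 < h) : 0 < gcr h := by
  unfold gcr
  have : (0:ℝ) < (h:ℝ) := by exact_mod_cast hh
  positivity

lemma gcr_pow (h n : ℕ) : gcr h ^ n = (h:ℝ)^(h*n) / ((h:ℝ)+1)^(h*n+n) := by
  unfold gcr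
  rw [div_pow, ← pow_mul, ← pow_mul]
  congr 2 <;> ring

lemma gc_choose_r_le_one (h n : ℕ) (hh : 0 < h) :
    (Nat.choose ((h+1)*n) n : ℝ) * gcr h ^ n ≤ 1 := by
  have key := gc_upper h n
  have e : (h+1)*n = h*n+n := by ring
  rw [e, gcr_pow]
  have hden : (0:ℝ) < ((h:ℝ)+1)^(h*n+n) := by positivity
  rw [mul_div_assoc', div_le_one hden]
  calc (Nat.choose (h*n+n) n : ℝ) * (h:ℝ)^(h*n)
      = ((Nat.choose (h*n+n) n * h^(h*n) : ℕ) : ℝ) := by push_cast; ring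
    _ ≤ (((1+h)^(h*n+n) : ℕ) : ℝ) := by exact_mod_cast key
    _ = ((h:ℝ)+1)^(h*n+n) := by push_cast; ring

lemma gc_one_le_choose_r (h n : ℕ) (hh : 0 < h) :
    1 ≤ ((h*n+n+1 : ℕ) : ℝ) * ((Nat.choose ((h+1)*n) n : ℝ) * gcr h ^ n) := by
  have key := gc_lower h n hh
  have e : (h+1)*n = h*n+n := by ring
  rw [e, gcr_pow]
  have hden : (0:ℝ) < ((h:ℝ)+1)^(h*n+n) := by positivity
  rw [mul_div_assoc', ← mul_div_assoc, le_div_iff₀ hden, one_mul]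
  calc ((h:ℝ)+1)^(h*n+n) = (((1+h)^(h*n+n) : ℕ) : ℝ) := by push_cast; ring
    _ ≤ (((h*n+n+1) * (Nat.choose (h*n+n) n * h^(h*n)) : ℕ) : ℝ) := by exact_mod_cast key
    _ = ((h*n+n+1 : ℕ) : ℝ) * (Nat.choose (h*n+n) n : ℝ) * (h:ℝ)^(h*n) := by push_cast; ring
    _ = ((h*n+n+1 : ℕ) : ℝ) * ((Nat.choose (h*n+n) n : ℝ) * (h:ℝ)^(h*n)) := by ring

lemma gc_abs_term_le (h : ℕ) (hh : 0 < h) (q : ℝ) (n : ℕ) (hq : 0 ≤ q) (hqr : q ≤ gcr h) :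
    gcA h n * q^n ≤ (q / gcr h)^n := by
  have hr := gcr_pos h hh
  have e : q^n = (q / gcr h)^n * gcr h ^ n := by
    rw [← mul_pow, div_mul_cancel₀ _ hr.ne']
  rw [e, ← mul_assoc, mul_comm (gcA h n), mul_assoc]
  have h1 : gcA h n * gcr h ^ n ≤ 1 := by
    have h2 : gcA h n ≤ (Nat.choose ((h+1)*n) n : ℝ) := by
      unfold gcA
      have hd : (1:ℝ) ≤ (h:ℝ)*n+1 := by
        have : (0:ℝ) ≤ (h:ℝ)*n := by positivity
        linarith
      calc 1 / ((h:ℝ) * n + 1) * (Nat.choose ((h+1)*n) n : ℝ)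
          ≤ 1 * (Nat.choose ((h+1)*n) n : ℝ) := by
            apply mul_le_mul_of_nonneg_right _ (by positivity)
            rw [div_le_one (by linarith)]; exact hd
        _ = _ := one_mul _
    calc gcA h n * gcr h ^ n ≤ (Nat.choose ((h+1)*n) n : ℝ) * gcr h ^ n := by
          apply mul_le_mul_of_nonneg_right h2 (by positivity)
      _ ≤ 1 := gc_choose_r_le_one h n hh
  calc (q / gcr h)^n * (gcA h n * gcr h ^ n) ≤ (q / gcr h)^n * 1 := by
        apply mul_le_mul_of_nonneg_left h1 (by positivity)
    _ = (q / gcr h)^n := mul_one _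

lemma gc_summable_norm_of_lt (h : ℕ) (hh : 0 < h) (q : ℝ) (hq : |q| < gcr h) :
    Summable (fun n => ‖gcA h n * q^n‖) := by
  have hr := gcr_pos h hh
  have hgeo : Summable (fun n : ℕ => (|q| / gcr h)^n) :=
    summable_geometric_of_lt_one (div_nonneg (abs_nonneg q) hr.le)
      (by rwa [div_lt_one hr])
  refine Summable.of_nonneg_of_le (fun n => norm_nonneg _) (fun n => ?_) hgeo
  rw [norm_mul, norm_pow, Real.norm_eq_abs, Real.norm_eq_abs,
    abs_of_nonneg (gcA_nonneg h n)]
  exact gc_abs_term_le h hh |q| n (abs_nonneg q) hq.le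

lemma gc_summable_of_lt (h : ℕ) (hh : 0 < h) (q : ℝ) (hq : |q| < gcr h) :
    Summable (fun n => gcA h n * q^n) :=
  (gc_summable_norm_of_lt h hh q hq).of_norm
lemma gc_not_summable (h : ℕ) (hh : 0 < h) (q : ℝ) (hq : gcr h < |q|) :
    ¬ Summable (fun n => gcA h n * q^n) := by
  intro hs
  have hr := gcr_pos h hh
  have hq0 : 0 < |q| := hr.trans hq
  set y : ℝ := gcr h / |q| with hy
  have hy0 : 0 < y := div_pos hr hq0
  have hy1 : y < 1 := by rw [hy, div_lt_one hq0]; exact hq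
  have hyn : ‖y‖ < 1 := by rw [Real.norm_eq_abs, abs_of_pos hy0]; exact hy1
  -- the polynomial-geometric sequence tends to 0
  set G : ℕ → ℝ := fun n => ((h*n+n+1 : ℕ) : ℝ) * (((h:ℝ)*n+1) * y^n) with hG
  have hGsum : Summable G := by
    have s2 := summable_pow_mul_geometric_of_norm_lt_one (R := ℝ) 2 hyn
    have s1 := summable_pow_mul_geometric_of_norm_lt_one (R := ℝ) 1 hyn
    have s0 := summable_pow_mul_geometric_of_norm_lt_one (R := ℝ) 0 hyn
    have hbig : Summable (fun n : ℕ =>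
        ((h:ℝ)+1)^2 * ((n:ℝ)^2 * y^n) + (((h:ℝ)+1)^2*2) * ((n:ℝ)^1 * y^n)
          + ((h:ℝ)+1)^2 * ((n:ℝ)^0 * y^n)) :=
      ((s2.mul_left _).add (s1.mul_left _)).add (s0.mul_left _)
    refine Summable.of_nonneg_of_le (fun n => ?_) (fun n => ?_) hbig
    · have : (0:ℝ) ≤ y^n := by positivity
      positivity
    · have h1 : ((h*n+n+1 : ℕ) : ℝ) ≤ ((h:ℝ)+1) * ((n:ℝ)+1) := by push_cast; nlinarith [Nat.cast_nonneg (α := ℝ) n, Nat.cast_nonneg (α := ℝ) h]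
      have h2 : ((h:ℝ)*n+1) ≤ ((h:ℝ)+1) * ((n:ℝ)+1) := by nlinarith [Nat.cast_nonneg (α := ℝ) n, Nat.cast_nonneg (α := ℝ) h]
      have hyp : (0:ℝ) ≤ y^n := by positivity
      have key : ((h*n+n+1 : ℕ) : ℝ) * (((h:ℝ)*n+1)) ≤ (((h:ℝ)+1) * ((n:ℝ)+1))^2 := by
        have ha : (0:ℝ) ≤ ((h*n+n+1 : ℕ) : ℝ) := by positivity
        calc ((h*n+n+1 : ℕ) : ℝ) * (((h:ℝ)*n+1))
            ≤ (((h:ℝ)+1) * ((n:ℝ)+1)) * (((h:ℝ)+1) * ((n:ℝ)+1)) := by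
              apply mul_le_mul h1 h2 (by positivity) (by positivity)
          _ = (((h:ℝ)+1) * ((n:ℝ)+1))^2 := by ring
      calc ((h*n+n+1 : ℕ) : ℝ) * (((h:ℝ)*n+1) * y^n)
          = (((h*n+n+1 : ℕ) : ℝ) * ((h:ℝ)*n+1)) * y^n := by ring
        _ ≤ (((h:ℝ)+1) * ((n:ℝ)+1))^2 * y^n := mul_le_mul_of_nonneg_right key hyp
        _ = ((h:ℝ)+1)^2 * ((n:ℝ)^2 * y^n) + (((h:ℝ)+1)^2*2) * ((n:ℝ)^1 * y^n)
              + ((h:ℝ)+1)^2 * ((n:ℝ)^0 * y^n) := by ring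
  have hG0 : Filter.Tendsto G Filter.atTop (nhds 0) := hGsum.tendsto_atTop_zero
  have hf0 : Filter.Tendsto (fun n => |gcA h n * q^n|) Filter.atTop (nhds 0) := by
    have := hs.tendsto_atTop_zero
    simpa using this.abs
  have hprod : Filter.Tendsto (fun n => |gcA h n * q^n| * G n) Filter.atTop (nhds 0) := by
    simpa using hf0.mul hG0
  have hone : ∀ n, 1 ≤ |gcA h n * q^n| * G n := by
    intro n
    have habs : |gcA h n * q^n| = gcA h n * |q|^n := by
      rw [abs_mul, abs_pow, abs_of_nonneg (gcA_nonneg h n)]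
    have hqy : |q| * y = gcr h := by
      rw [hy, mul_div_cancel₀ _ hq0.ne']
    have hd : ((h:ℝ)*n+1) ≠ 0 := by positivity
    have e : |gcA h n * q^n| * G n
        = ((h*n+n+1 : ℕ) : ℝ) * ((Nat.choose ((h+1)*n) n : ℝ) * gcr h ^ n) := by
      rw [habs, hG]
      unfold gcA
      rw [← hqy, mul_pow]
      field_simp
    rw [e]
    exact gc_one_le_choose_r h n hh
  have : (1:ℝ) ≤ 0 := ge_of_tendsto hprod (Filter.Eventually.of_forall hone)
  linarith
lemma gc_pow_eq (h : ℕ) (q : ℝ) (hsum : Summable fun n => ‖gcA h n * q^n‖) :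
    ∀ t : ℕ, ((∑' n, gcA h n * q^n)^t = ∑' n, gcR h t n * q^n)
      ∧ Summable (fun n => ‖gcR h t n * q^n‖) := by
  intro t
  induction t with
  | zero =>
    constructor
    · rw [pow_zero]
      symm
      have : ∀ n : ℕ, n ≠ 0 → gcR h 0 n * q^n = 0 := by
        intro n hn; rw [gcR_zero_left h n hn, zero_mul]
      rw [tsum_eq_single 0 this, gcR_zero_right, pow_zero, mul_one]
    · apply summable_of_ne_finset_zero (s := {0})
      intro n hn
      simp only [Finset.mem_singleton] at hn
      rw [gcR_zero_left h n hn, zero_mul, norm_zero]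
  | succ t IH =>
    obtain ⟨IHeq, IHsum⟩ := IH
    have key : ∀ n : ℕ, (∑ k ∈ Finset.range (n+1), (gcA h k * q^k) * (gcR h t (n-k) * q^(n-k)))
        = gcR h (t+1) n * q^n := by
      intro n
      have : ∀ k ∈ Finset.range (n+1), (gcA h k * q^k) * (gcR h t (n-k) * q^(n-k))
          = (gcR h 1 k * gcR h t (n-k)) * q^n := by
        intro k hk
        have hk' : k ≤ n := by have := Finset.mem_range.mp hk; omega
        rw [gcA_eq]
        have : q^k * q^(n-k) = q^n := by
          rw [← pow_add]; congr 1; omega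
        calc gcR h 1 k * q^k * (gcR h t (n-k) * q^(n-k))
            = (gcR h 1 k * gcR h t (n-k)) * (q^k * q^(n-k)) := by ring
          _ = (gcR h 1 k * gcR h t (n-k)) * q^n := by rw [this]
      rw [Finset.sum_congr rfl this, ← Finset.sum_mul, gcR_conv h n t]
    constructor
    · rw [pow_succ, mul_comm ((∑' n, gcA h n * q^n)^t), IHeq,
        tsum_mul_tsum_eq_tsum_sum_range_of_summable_norm hsum IHsum]
      exact tsum_congr key
    · have := summable_norm_sum_mul_range_of_summable_norm hsum IHsum
      refine this.congr (fun n => ?_)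
      rw [key n]
lemma gcA_zero (h : ℕ) : gcA h 0 = 1 := by
  unfold gcA; simp

lemma gc_FE (h : ℕ) (q : ℝ) (hsum : Summable fun n => ‖gcA h n * q^n‖) :
    (∑' n, gcA h n * q^n) = 1 + q * (∑' n, gcA h n * q^n)^(h+1) := by
  obtain ⟨heq, hs⟩ := gc_pow_eq h q hsum (h+1)
  rw [heq]
  have hsum' : Summable (fun n => gcA h n * q^n) := hsum.of_norm
  rw [Summable.tsum_eq_zero_add hsum', gcA_zero, pow_zero, mul_one]
  congr 1
  rw [← tsum_mul_left]
  apply tsum_congr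
  intro n
  rw [gcA_eq, ← gcR_shift]
  ring

lemma gc_cont (h : ℕ) (hh : 0 < h) (q1 : ℝ) (h0 : 0 ≤ q1) (h1 : q1 < gcr h) :
    ContinuousOn (fun q => ∑' n, gcA h n * q^n) (Set.Icc 0 q1) := by
  set proj : ℝ → ℝ := fun q => max 0 (min q q1) with hproj
  have hprojcont : Continuous proj := by
    apply Continuous.max continuous_const
    exact Continuous.min continuous_id continuous_const
  have hb : ∀ (n : ℕ) (q : ℝ), ‖gcA h n * (proj q)^n‖ ≤ gcA h n * q1^n := by
    intro n q
    rw [norm_mul, norm_pow, Real.norm_eq_abs, Real.norm_eq_abs,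
      abs_of_nonneg (gcA_nonneg h n)]
    apply mul_le_mul_of_nonneg_left _ (gcA_nonneg h n)
    have h2 : |proj q| = proj q := abs_of_nonneg (le_max_left _ _)
    rw [h2]
    apply pow_le_pow_left₀ (le_max_left _ _)
    apply max_le h0
    exact min_le_right _ _
  have hu : Summable (fun n => gcA h n * q1^n) := by
    apply gc_summable_of_lt h hh q1
    rwa [abs_of_nonneg h0]
  have hcont : Continuous (fun q => ∑' n, gcA h n * (proj q)^n) := by
    apply continuous_tsum (fun n => by continuity) hu
    intro n q; exact hb n q
  apply hcont.continuousOn.congr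
  intro q hq
  obtain ⟨hq0, hq1⟩ := hq
  have hpq : proj q = q := by
    rw [hproj]; simp only []
    rw [min_eq_left hq1, max_eq_right hq0]
  show (∑' n, gcA h n * q^n) = ∑' n, gcA h n * (proj q)^n
  rw [hpq]

lemma gc_root_algebra (h : ℕ) (hh : 0 < h) :
    gcr h * (((h:ℝ)+1)/h)^(h+1) = ((h:ℝ)+1)/h - 1 ∧
    gcr h * (((h:ℝ)+1) * (((h:ℝ)+1)/h)^h) = 1 := by
  have hh0 : (h:ℝ) ≠ 0 := by
    have : (0:ℝ) < h := by exact_mod_cast hh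
    exact this.ne'
  have hh1 : ((h:ℝ)+1) ≠ 0 := by positivity
  constructor
  · unfold gcr
    rw [div_pow]
    field_simp
    ring
  · unfold gcr
    rw [div_pow]
    field_simp
    ring

lemma gc_tsum_le (h : ℕ) (hh : 0 < h) (q : ℝ) (h0 : 0 ≤ q) (h1 : q < gcr h) :
    (∑' n, gcA h n * q^n) ≤ ((h:ℝ)+1)/h := by
  by_contra hcon
  push_neg at hcon
  set Y : ℝ := ((h:ℝ)+1)/h with hY
  set F : ℝ → ℝ := fun q => ∑' n, gcA h n * q^n with hF
  have hF0 : F 0 = 1 := by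
    show (∑' (n:ℕ), gcA h n * (0:ℝ)^n) = 1
    have : ∀ n : ℕ, n ≠ 0 → gcA h n * (0:ℝ)^n = 0 := by
      intro n hn
      rw [zero_pow hn, mul_zero]
    rw [tsum_eq_single 0 this, gcA_zero, pow_zero, mul_one]
  have hcontF : ContinuousOn F (Set.Icc 0 q) := gc_cont h hh q h0 h1
  have hY1 : 1 < Y := by
    rw [hY, lt_div_iff₀ (by exact_mod_cast hh)]
    simp
  have hmem : Y ∈ Set.Icc (F 0) (F q) := by
    constructor
    · rw [hF0]; exact hY1.le
    · exact hcon.le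
  obtain ⟨c, hc, hFc⟩ := intermediate_value_Icc h0 hcontF hmem
  obtain ⟨hc0, hcq⟩ := hc
  have hcr : |c| < gcr h := by
    rw [abs_of_nonneg hc0]; exact lt_of_le_of_lt hcq h1
  have hsum : Summable fun n => ‖gcA h n * c^n‖ :=
    gc_summable_norm_of_lt h hh c hcr
  have hFE := gc_FE h c hsum
  have hFc' : (∑' (n : ℕ), gcA h n * c ^ n) = Y := hFc
  rw [hFc'] at hFE
  obtain ⟨hr1, hr2⟩ := gc_root_algebra h hh
  -- From Y = 1 + c * Y^(h+1) and gcr h * Y^(h+1) = Y - 1, get c = gcr h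
  have hYpow : (0:ℝ) < Y^(h+1) := by positivity
  have : c * Y^(h+1) = gcr h * Y^(h+1) := by
    rw [hr1]; linarith
  have hceq : c = gcr h := by
    have := mul_right_cancel₀ hYpow.ne' this
    exact this
  rw [hceq] at hcq
  linarith
lemma gc_partial_le (h : ℕ) (hh : 0 < h) (N : ℕ) :
    (∑ n ∈ Finset.range N, gcA h n * gcr h ^ n) ≤ ((h:ℝ)+1)/h := by
  have hr := gcr_pos h hh
  set P : ℝ → ℝ := fun q => ∑ n ∈ Finset.range N, gcA h n * q^n with hP
  have hPcont : Continuous P := by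
    apply continuous_finset_sum
    intro n _
    exact continuous_const.mul (continuous_pow n)
  have htend : Filter.Tendsto P (nhdsWithin (gcr h) (Set.Iio (gcr h))) (nhds (P (gcr h))) :=
    (hPcont.tendsto (gcr h)).mono_left nhdsWithin_le_nhds
  have hev : ∀ᶠ q in nhdsWithin (gcr h) (Set.Iio (gcr h)), P q ≤ ((h:ℝ)+1)/h := by
    filter_upwards [Ioo_mem_nhdsLT_of_mem (show gcr h ∈ Set.Ioc 0 (gcr h) from ⟨hr, le_rfl⟩)]
    intro q hq
    obtain ⟨hq0, hq1⟩ := hq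
    have hsum := gc_summable_of_lt h hh q (by rwa [abs_of_nonneg hq0.le])
    have h1 : P q ≤ ∑' n, gcA h n * q^n := by
      apply Summable.sum_le_tsum (Finset.range N) _ hsum
      intro i _
      have : (0:ℝ) ≤ q^i := by positivity
      exact mul_nonneg (gcA_nonneg h i) this
    exact h1.trans (gc_tsum_le h hh q hq0.le hq1)
  exact le_of_tendsto htend hev

lemma gc_boundary_summable (h : ℕ) (hh : 0 < h) :
    Summable (fun n => gcA h n * gcr h ^ n) := by
  apply summable_of_sum_range_le (c := ((h:ℝ)+1)/h)
  · intro n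
    have hr := gcr_pos h hh
    have : (0:ℝ) ≤ gcr h ^ n := by positivity
    exact mul_nonneg (gcA_nonneg h n) this
  · exact gc_partial_le h hh

lemma gc_boundary_tsum : ∀ (h : ℕ), 0 < h →
    (∑' n, gcA h n * gcr h ^ n) = ((h:ℝ)+1)/h := by
  intro h hh
  have hr := gcr_pos h hh
  have hnn : ∀ n : ℕ, (0:ℝ) ≤ gcA h n * gcr h ^ n := by
    intro n
    have : (0:ℝ) ≤ gcr h ^ n := by positivity
    exact mul_nonneg (gcA_nonneg h n) this
  have hsum := gc_boundary_summable h hh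
  have hnorm : Summable (fun n => ‖gcA h n * gcr h ^ n‖) := by
    refine hsum.congr (fun n => ?_)
    rw [Real.norm_eq_abs, abs_of_nonneg (hnn n)]
  set S : ℝ := ∑' n, gcA h n * gcr h ^ n with hS
  set Y : ℝ := ((h:ℝ)+1)/h with hY
  have hSY : S ≤ Y := Real.tsum_le_of_sum_range_le hnn (gc_partial_le h hh)
  have h1S : 1 ≤ S := by
    have := Summable.le_tsum hsum 0 (fun i _ => hnn i)
    rw [gcA_zero, pow_zero, mul_one] at this
    exact this
  have heq := gc_FE h (gcr h) hnorm
  rw [← hS] at heq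
  obtain ⟨hr1, hr2⟩ := gc_root_algebra h hh
  by_contra hne
  have hSltY : S < Y := lt_of_le_of_ne hSY hne
  have hS0 : (0:ℝ) ≤ S := le_trans zero_le_one h1S
  have hYpos : (0:ℝ) < Y := lt_of_le_of_lt (le_trans zero_le_one h1S) hSltY
  -- r * (Y^(h+1) - S^(h+1)) = Y - S
  have e3 : gcr h * S^(h+1) = S - 1 := by linarith
  have e4 : gcr h * (Y^(h+1) - S^(h+1)) = Y - S := by
    linear_combination hr1 - e3
  have hfac := geom_sum₂_mul Y S (h+1)
  have hsumlt : (∑ i ∈ Finset.range (h+1), Y^i * S^(h+1-1-i)) < ((h:ℝ)+1) * Y^h := by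
    have hconst : ((h:ℝ)+1) * Y^h = ∑ _i ∈ Finset.range (h+1), Y^h := by
      rw [Finset.sum_const, Finset.card_range, nsmul_eq_mul]
      push_cast; ring
    rw [hconst]
    apply Finset.sum_lt_sum
    · intro i hi
      have hile : i ≤ h := by have := Finset.mem_range.mp hi; omega
      have step1 : Y^i * S^(h+1-1-i) ≤ Y^i * Y^(h+1-1-i) := by
        apply mul_le_mul_of_nonneg_left _ (pow_nonneg hYpos.le i)
        exact pow_le_pow_left₀ hS0 hSltY.le _
      have step2 : Y^i * Y^(h+1-1-i) = Y^h := by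
        rw [← pow_add]; congr 1; omega
      rw [← step2]; exact step1
    · refine ⟨0, Finset.mem_range.mpr (by omega), ?_⟩
      have e5 : h+1-1-0 = h := by omega
      rw [e5, pow_zero, one_mul]
      exact pow_lt_pow_left₀ hSltY hS0 (by omega)
  have hYS : 0 < Y - S := by linarith
  have hlt : gcr h * (∑ i ∈ Finset.range (h+1), Y^i * S^(h+1-1-i)) < 1 := by
    calc gcr h * (∑ i ∈ Finset.range (h+1), Y^i * S^(h+1-1-i))
        < gcr h * (((h:ℝ)+1) * Y^h) := by
          exact mul_lt_mul_of_pos_left hsumlt hr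
      _ = 1 := hr2
  have hfinal : Y - S < Y - S := by
    calc Y - S = gcr h * (Y^(h+1) - S^(h+1)) := e4.symm
      _ = gcr h * ((∑ i ∈ Finset.range (h+1), Y^i * S^(h+1-1-i)) * (Y - S)) := by rw [hfac]
      _ = (gcr h * (∑ i ∈ Finset.range (h+1), Y^i * S^(h+1-1-i))) * (Y - S) := by ring
      _ < 1 * (Y - S) := mul_lt_mul_of_pos_right hlt hYS
      _ = Y - S := one_mul _
  linarith

/-- The radius of convergence of `A_h(q) = Σ (1/(hn+1)) binom((h+1)n,n) q^n` is
`h^h/(h+1)^{h+1}`: the series is summable for `|q|` below this value, not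
summable above it, and at this value it sums to `(h+1)/h`. -/
theorem genCatalan_radius (h : ℕ) (hh : 0 < h) :
    (∀ q : ℝ, |q| < (h : ℝ) ^ h / (h + 1) ^ (h + 1) →
      Summable (fun n : ℕ =>
        (1 / ((h : ℝ) * n + 1)) * (Nat.choose ((h + 1) * n) n : ℝ) * q ^ n)) ∧
    (∀ q : ℝ, (h : ℝ) ^ h / (h + 1) ^ (h + 1) < |q| →
      ¬ Summable (fun n : ℕ =>
        (1 / ((h : ℝ) * n + 1)) * (Nat.choose ((h + 1) * n) n : ℝ) * q ^ n)) ∧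
    ∑' n : ℕ, (1 / ((h : ℝ) * n + 1)) * (Nat.choose ((h + 1) * n) n : ℝ) *
        ((h : ℝ) ^ h / (h + 1) ^ (h + 1)) ^ n = ((h : ℝ) + 1) / h := by
  have hgcr : gcr h = (h : ℝ) ^ h / (h + 1) ^ (h + 1) := rfl
  have hterm : ∀ q : ℝ, (fun n : ℕ =>
      (1 / ((h : ℝ) * n + 1)) * (Nat.choose ((h + 1) * n) n : ℝ) * q ^ n)
        = fun n => gcA h n * q ^ n := by
    intro q; funext n; rw [gcA]
  refine ⟨?_, ?_, ?_⟩
  · intro q hq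
    rw [hterm q]
    exact gc_summable_of_lt h hh q (by rwa [hgcr])
  · intro q hq
    rw [hterm q]
    exact gc_not_summable h hh q (by rwa [hgcr])
  · rw [← hgcr, hterm (gcr h)]
    exact gc_boundary_tsum h hh
end

section
/- Under the parametrization z = x(1 − g x^h), one has z^2 · A'_h(g z^h) = (x^2/2)·( (2/(h+2))·g x^h − (g x^h)^2 ), as an identity of formal power series in x. -/
/-- `A'_h(q) = Σ_{n≥1} A_{h,n}/(hn+2) q^n` with
`A_{h,n} = (1/(hn+1)) binom((h+1)n,n)`, coefficients in `ℚ[g]`. -/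
noncomputable def genCatalanGF' (h : ℕ) : PowerSeries (Polynomial ℚ) :=
  PowerSeries.mk fun n =>
    if n = 0 then 0 else
      Polynomial.C ((1 / ((h : ℚ) * n + 1)) * (Nat.choose ((h + 1) * n) n : ℚ) /
        ((h : ℚ) * n + 2))

open Finset

namespace GenCatAux

noncomputable def ich (c : ℚ) (m : ℕ) : ℚ := (∏ i ∈ Finset.range m, (c - i)) / m.factorial

noncomputable def w (h k : ℕ) : ℚ :=
  1 / ((h : ℚ) * k + 1) * (Nat.choose ((h + 1) * k) k : ℚ) / ((h : ℚ) * k + 2)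

noncomputable def Rj (h J : ℕ) (c : ℚ) : ℚ :=
  if J = 0 then 1/2 else
    (c + ((h : ℚ) * ((h:ℚ)+1) * J + 2*((h:ℚ)+2))/((h:ℚ)+2)) *
      (∏ i ∈ Finset.range (J-1), (c + ((h:ℚ)+1)*J + 1 - i)) / (2 * (J.factorial : ℚ))

@[simp] lemma ich_zero (c : ℚ) : ich c 0 = 1 := by simp [ich]

lemma peel_first (c : ℚ) (m : ℕ) :
    ∏ i ∈ range (m+1), (c - i) = (∏ i ∈ range m, (c - 1 - i)) * c := by
  rw [Finset.prod_range_succ' (fun i => c - (i:ℕ)) m]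
  simp only [Nat.cast_zero, sub_zero, Nat.cast_add, Nat.cast_one]
  congr 1
  exact Finset.prod_congr rfl fun i _ => by ring

lemma prod_shift (x : ℚ) (m : ℕ) :
    x * ∏ i ∈ range m, (x - 1 - i) = (∏ i ∈ range m, (x - i)) * (x - m) := by
  have h2 : (∏ i ∈ range (m+1), (x - i)) = (∏ i ∈ range m, (x - i)) * (x - m) :=
    Finset.prod_range_succ _ m
  rw [← h2, peel_first, mul_comm]

lemma ich_pascal (c : ℚ) (m : ℕ) :
    ich c (m+1) = ich (c-1) (m+1) + ich (c-1) m := by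
  have h1 := peel_first c m
  have h2 : (∏ i ∈ range (m+1), ((c-1) - i)) = (∏ i ∈ range m, (c - 1 - i)) * (c - 1 - m) :=
    Finset.prod_range_succ _ m
  have hfac : ((m+1).factorial : ℚ) = ((m:ℚ)+1) * (m.factorial : ℚ) := by
    rw [Nat.factorial_succ]; push_cast; ring
  have hfm : (m.factorial : ℚ) ≠ 0 := by positivity
  have hfm1 : ((m:ℚ)+1) ≠ 0 := by positivity
  simp only [ich, h1, h2, hfac]
  field_simp
  ring

lemma ich_step (h m : ℕ) (hm : m ≠ 0) :
    ((h:ℚ)+1) * ich (((h:ℚ)+1)*m - 1) m = (h:ℚ) * ich (((h:ℚ)+1)*m) m := by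
  set x : ℚ := ((h:ℚ)+1)*m with hx
  have key := prod_shift x m
  have hfm : (m.factorial : ℚ) ≠ 0 := by positivity
  have hmq : (m : ℚ) ≠ 0 := Nat.cast_ne_zero.mpr hm
  apply mul_left_cancel₀ hmq
  have hprod : (∏ i ∈ range m, ((x - 1) - i)) = ∏ i ∈ range m, (x - 1 - i) := by
    exact Finset.prod_congr rfl fun i _ => by ring
  simp only [ich, hprod]
  rw [mul_div_assoc', mul_div_assoc', mul_div_assoc', mul_div_assoc']
  congr 1
  have hxm : x - m = (h:ℚ) * m := by rw [hx]; ring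
  calc (m:ℚ) * (((h:ℚ)+1) * ∏ i ∈ range m, (x - 1 - i))
      = x * ∏ i ∈ range m, (x - 1 - i) := by rw [hx]; ring
    _ = (∏ i ∈ range m, (x - i)) * ((h:ℚ)*m) := by rw [key, hxm]
    _ = (m:ℚ) * ((h:ℚ) * ∏ i ∈ range m, (x - i)) := by ring

lemma cast_descFactorial (n k : ℕ) :
    ((n.descFactorial k : ℕ) : ℚ) = ∏ i ∈ range k, ((n:ℚ) - i) := by
  induction k with
  | zero => simp
  | succ k ih =>
    rw [Finset.prod_range_succ, ← ih, Nat.descFactorial_succ]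
    by_cases hkn : k < n
    · push_cast [Nat.cast_sub hkn.le]
      ring
    · rcases Nat.lt_or_ge n k with hlt | hge
      · have hd : ((n.descFactorial k : ℕ) : ℚ) = 0 := by
          rw [ih]
          exact Finset.prod_eq_zero (Finset.mem_range.mpr hlt) (by simp)
        rw [Nat.sub_eq_zero_of_le (by omega)]
        rw [hd]
        push_cast
        ring
      · have hnk : n = k := by omega
        subst hnk
        rw [Nat.sub_self]
        push_cast
        ring

lemma cast_choose_prod (n k : ℕ) :
    (n.choose k : ℚ) * (k.factorial : ℚ) = ∏ i ∈ range k, ((n:ℚ) - i) := by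
  rw [← cast_descFactorial, Nat.descFactorial_eq_factorial_mul_choose]
  push_cast
  ring

lemma neg_binom (N m : ℕ) :
    ich ((m:ℚ) - N - 1) m = (-1)^m * (N.choose m : ℚ) := by
  have h1 : (∏ i ∈ range m, (((m:ℚ) - N - 1) - i)) = ∏ i ∈ range m, (-1 : ℚ) * ((N:ℚ) - i) := by
    rw [← Finset.prod_range_reflect]
    apply Finset.prod_congr rfl
    intro i hi
    rw [Finset.mem_range] at hi
    have : ((m - 1 - i : ℕ) : ℚ) = (m:ℚ) - 1 - i := by
      push_cast [Nat.cast_sub (by omega : 1 + i ≤ m)]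
      rw [Nat.sub_sub]
      push_cast [Nat.cast_sub (by omega : 1 + i ≤ m)]
      ring
    rw [this]
    ring
  rw [ich, h1, Finset.prod_mul_distrib, Finset.prod_const, Finset.card_range,
    ← cast_choose_prod]
  have : (m.factorial : ℚ) ≠ 0 := by positivity
  field_simp

lemma h2ne (h : ℕ) : ((h:ℚ)+2) ≠ 0 := by positivity

lemma Rj_pascal (h J : ℕ) (hJ : 1 ≤ J) (c : ℚ) :
    Rj h J c - Rj h J (c-1) = Rj h (J-1) (c+(h:ℚ)) := by
  match J, hJ with
  | 1, _ =>
    simp only [Rj, if_neg one_ne_zero, if_pos rfl]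
    simp only [Nat.sub_self, Finset.range_zero, Finset.prod_empty, Nat.factorial_one]
    push_cast
    field_simp
    ring
  | (j+2), _ =>
    have hfacne : ((j+1).factorial : ℚ) ≠ 0 := by positivity
    have hjne : ((j:ℚ)+2) ≠ 0 := by positivity
    -- products
    set B : ℚ := ∏ i ∈ range j, (c + ((h:ℚ)+1)*(j+2) - i) with hB
    have hA : (∏ i ∈ range (j+1), (c + ((h:ℚ)+1)*((j:ℚ)+2) + 1 - i))
        = (c + ((h:ℚ)+1)*((j:ℚ)+2) + 1) * B := by
      rw [Finset.prod_range_succ' (fun i => c + ((h:ℚ)+1)*((j:ℚ)+2) + 1 - (i:ℕ)) j]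
      simp only [Nat.cast_zero, sub_zero, Nat.cast_add, Nat.cast_one]
      rw [mul_comm]
      congr 1
      exact Finset.prod_congr rfl fun i _ => by push_cast; ring
    have hA' : (∏ i ∈ range (j+1), ((c-1) + ((h:ℚ)+1)*((j:ℚ)+2) + 1 - i))
        = B * (c + (h:ℚ)*((j:ℚ)+2) + 2) := by
      have := Finset.prod_range_succ (fun i => (c-1) + ((h:ℚ)+1)*((j:ℚ)+2) + 1 - (i:ℕ)) j
      rw [this]
      congr 1
      · exact Finset.prod_congr rfl fun i _ => by push_cast; ring
      · push_cast; ring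
    have hR : (∏ i ∈ range j, ((c+(h:ℚ)) + ((h:ℚ)+1)*((j:ℚ)+1) + 1 - i)) = B := by
      exact Finset.prod_congr rfl fun i _ => by push_cast; ring
    simp only [Rj, if_neg (by omega : j + 2 ≠ 0), if_neg (by omega : j + 2 - 1 ≠ 0)]
    have e1 : ((j:ℕ)+2) - 1 = j + 1 := rfl
    rw [e1]
    have e2 : (j + 1) - 1 = j := rfl
    rw [e2]
    push_cast
    rw [hA]
    have hA'2 : (∏ i ∈ range (j+1), (c - 1 + ((h:ℚ)+1)*((j:ℚ)+2) + 1 - i))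
        = B * (c + (h:ℚ)*((j:ℚ)+2) + 2) := by
      rw [show (c - 1 + ((h:ℚ)+1)*((j:ℚ)+2) + 1) = ((c-1) + ((h:ℚ)+1)*((j:ℚ)+2) + 1) by ring]
      rw [hA']
    rw [hA'2, hR]
    have hfs : (((j:ℕ)+2).factorial : ℚ) = ((j:ℚ)+2) * ((j+1).factorial : ℚ) := by
      rw [Nat.factorial_succ]; push_cast; ring
    rw [hfs]
    field_simp
    ring

lemma Rj_pin (h J : ℕ) (hJ : 1 ≤ J) :
    ((h:ℚ)+1) * Rj h J (-1) - (h:ℚ) * Rj h J 0 = w h J := by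
  match J, hJ with
  | 1, _ =>
    simp only [Rj, w, if_neg one_ne_zero]
    simp only [Nat.sub_self, Finset.range_zero, Finset.prod_empty, Nat.factorial_one]
    rw [show (h+1)*1 = h+1 by ring, Nat.choose_one_right]
    have h2 : ((h:ℚ)+2) ≠ 0 := by positivity
    have h1 : ((h:ℚ)+1) ≠ 0 := by positivity
    push_cast
    field_simp
    ring
  | (j+2), _ =>
    have hfacne : (((j:ℕ)+2).factorial : ℚ) ≠ 0 := by positivity
    set B : ℚ := ∏ i ∈ range j, (((h:ℚ)+1)*((j:ℚ)+2) - i) with hB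
    have hA0 : (∏ i ∈ range (j+1), ((0:ℚ) + ((h:ℚ)+1)*((j:ℚ)+2) + 1 - i))
        = (((h:ℚ)+1)*((j:ℚ)+2) + 1) * B := by
      rw [Finset.prod_range_succ' (fun i => (0:ℚ) + ((h:ℚ)+1)*((j:ℚ)+2) + 1 - (i:ℕ)) j,
        Finset.prod_congr rfl (fun i (_ : i ∈ range j) => (by push_cast; ring :
          (0:ℚ) + ((h:ℚ)+1)*((j:ℚ)+2) + 1 - (((i+1:ℕ)):ℚ) = ((h:ℚ)+1)*((j:ℚ)+2) - (i:ℕ)))]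
      push_cast; ring
    have hA1 : (∏ i ∈ range (j+1), ((-1:ℚ) + ((h:ℚ)+1)*((j:ℚ)+2) + 1 - i))
        = B * ((h:ℚ)*((j:ℚ)+2) + 2) := by
      rw [Finset.prod_range_succ (fun i => (-1:ℚ) + ((h:ℚ)+1)*((j:ℚ)+2) + 1 - (i:ℕ)) j,
        Finset.prod_congr rfl (fun i (_ : i ∈ range j) => (by push_cast; ring :
          (-1:ℚ) + ((h:ℚ)+1)*((j:ℚ)+2) + 1 - ((i:ℕ):ℚ) = ((h:ℚ)+1)*((j:ℚ)+2) - (i:ℕ)))]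
      push_cast; ring
    have hchoose : ((((h:ℕ)+1)*((j:ℕ)+2)).choose (j+2) : ℚ) * (((j:ℕ)+2).factorial : ℚ)
        = B * ((h:ℚ)*((j:ℚ)+2) + 2) * ((h:ℚ)*((j:ℚ)+2) + 1) := by
      rw [cast_choose_prod]
      rw [Finset.prod_range_succ (fun i => ((((h:ℕ)+1)*((j:ℕ)+2) : ℕ) : ℚ) - (i:ℕ)) (j+1)]
      rw [Finset.prod_range_succ (fun i => ((((h:ℕ)+1)*((j:ℕ)+2) : ℕ) : ℚ) - (i:ℕ)) j]
      have hc : ∀ i : ℕ, ((((h:ℕ)+1)*((j:ℕ)+2) : ℕ) : ℚ) - (i:ℕ) = ((h:ℚ)+1)*((j:ℚ)+2) - i := by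
        intro i; push_cast; ring
      rw [Finset.prod_congr rfl (fun i _ => hc i), hc j, hc (j+1)]
      push_cast
      ring
    have hj1 : ((h:ℚ)*((j:ℚ)+2) + 1) ≠ 0 := by positivity
    have hj2 : ((h:ℚ)*((j:ℚ)+2) + 2) ≠ 0 := by positivity
    have h2 : ((h:ℚ)+2) ≠ 0 := by positivity
    simp only [Rj, w, if_neg (by omega : j + 2 ≠ 0)]
    have e1 : ((j:ℕ)+2) - 1 = j + 1 := rfl
    rw [e1]
    push_cast
    rw [hA1, hA0]
    have hch : ((((h:ℕ)+1)*((j:ℕ)+2)).choose (j+2) : ℚ)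
        = B * ((h:ℚ)*((j:ℚ)+2) + 2) * ((h:ℚ)*((j:ℚ)+2) + 1) / (((j:ℕ)+2).factorial : ℚ) := by
      rw [eq_div_iff hfacne]
      exact hchoose
    rw [hch]
    field_simp
    ring

/-- the Hagen-type sum -/
noncomputable def S (h j : ℕ) (c : ℚ) : ℚ :=
  ∑ k ∈ range (j+1), w h k * ich (c + ((h:ℚ)+1) * ((j-k : ℕ) : ℚ)) (j-k)

lemma master (h : ℕ) (hh : 0 < h) : ∀ (j : ℕ) (c : ℤ), S h j (c:ℚ) = Rj h j (c:ℚ) := by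
  intro j
  induction j with
  | zero =>
    intro c
    simp [S, Rj, w]
  | succ j IH =>
    have hdiff : ∀ c : ℤ, S h (j+1) (c:ℚ) - S h (j+1) ((c:ℚ)-1) = Rj h j ((c:ℚ) + (h:ℚ)) := by
      intro c
      have expand : S h (j+1) (c:ℚ) - S h (j+1) ((c:ℚ)-1)
          = ∑ k ∈ range (j+2), w h k *
              (ich ((c:ℚ) + ((h:ℚ)+1) * ((j+1-k : ℕ) : ℚ)) (j+1-k)
               - ich (((c:ℚ)-1) + ((h:ℚ)+1) * ((j+1-k : ℕ) : ℚ)) (j+1-k)) := by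
        simp only [S, ← Finset.sum_sub_distrib]
        exact Finset.sum_congr rfl fun k _ => by ring
      rw [expand, Finset.sum_range_succ]
      have hlast : w h (j+1) *
          (ich ((c:ℚ) + ((h:ℚ)+1) * ((j+1-(j+1) : ℕ) : ℚ)) (j+1-(j+1))
           - ich (((c:ℚ)-1) + ((h:ℚ)+1) * ((j+1-(j+1) : ℕ) : ℚ)) (j+1-(j+1))) = 0 := by
        simp [Nat.sub_self]
      rw [hlast, add_zero]
      have hterm : ∀ k ∈ range (j+1), w h k *
          (ich ((c:ℚ) + ((h:ℚ)+1) * ((j+1-k : ℕ) : ℚ)) (j+1-k)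
           - ich (((c:ℚ)-1) + ((h:ℚ)+1) * ((j+1-k : ℕ) : ℚ)) (j+1-k))
          = w h k * ich (((c:ℚ)+(h:ℚ)) + ((h:ℚ)+1) * ((j-k : ℕ) : ℚ)) (j-k) := by
        intro k hk
        rw [Finset.mem_range] at hk
        have hm : j + 1 - k = (j - k) + 1 := by omega
        rw [hm]
        congr 1
        have e : (((j-k)+1 : ℕ) : ℚ) = ((j-k : ℕ):ℚ) + 1 := by push_cast; ring
        rw [e]
        set C : ℚ := (c:ℚ) + ((h:ℚ)+1) * (((j-k : ℕ):ℚ) + 1) with hC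
        have hp := ich_pascal C (j-k)
        have harg1 : ((c:ℚ)-1) + ((h:ℚ)+1) * (((j-k : ℕ) : ℚ)+1) = C - 1 := by rw [hC]; ring
        have harg2 : ((c:ℚ)+(h:ℚ)) + ((h:ℚ)+1) * ((j-k : ℕ) : ℚ) = C - 1 := by rw [hC]; ring
        rw [harg1, harg2]
        linarith [hp]
      rw [Finset.sum_congr rfl hterm]
      have hIH := IH (c + (h:ℤ))
      have hcast : (((c + (h:ℤ)) : ℤ):ℚ) = (c:ℚ) + (h:ℚ) := by push_cast; ring
      rw [hcast] at hIH
      rw [← hIH, S]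
    set D : ℤ → ℚ := fun c => S h (j+1) (c:ℚ) - Rj h (j+1) (c:ℚ) with hD
    have hstep : ∀ c : ℤ, D c = D (c-1) := by
      intro c
      have h1 := hdiff c
      have h2 : Rj h (j+1) (c:ℚ) - Rj h (j+1) ((c:ℚ)-1) = Rj h j ((c:ℚ)+(h:ℚ)) :=
        Rj_pascal h (j+1) (by omega) (c:ℚ)
      simp only [hD]
      have hc1 : ((c-1 : ℤ):ℚ) = (c:ℚ) - 1 := by push_cast; ring
      rw [hc1]
      linarith [h1, h2]
    have hconst : ∀ c : ℤ, D c = D 0 := by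
      intro c
      induction c using Int.induction_on with
      | zero => rfl
      | succ n ih =>
        calc D ((n:ℤ)+1) = D (((n:ℤ)+1)-1) := hstep _
          _ = D (n:ℤ) := by norm_num
          _ = D 0 := ih
      | pred n ih =>
        calc D (-(n:ℤ)-1) = D ((-(n:ℤ))-1) := by norm_num
          _ = D (-(n:ℤ)) := (hstep (-(n:ℤ))).symm
          _ = D 0 := ih
    -- pinning: D 0 = 0
    have hpin1 : ((h:ℚ)+1) * S h (j+1) ((-1:ℤ):ℚ) - (h:ℚ) * S h (j+1) ((0:ℤ):ℚ) = w h (j+1) := by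
      simp only [S, Finset.mul_sum, ← Finset.sum_sub_distrib]
      rw [Finset.sum_range_succ]
      have hlast : ((h:ℚ)+1) * (w h (j+1) * ich (((-1:ℤ):ℚ) + ((h:ℚ)+1) * ((j+1-(j+1) : ℕ) : ℚ)) (j+1-(j+1)))
          - (h:ℚ) * (w h (j+1) * ich (((0:ℤ):ℚ) + ((h:ℚ)+1) * ((j+1-(j+1) : ℕ) : ℚ)) (j+1-(j+1)))
          = w h (j+1) := by
        simp [Nat.sub_self]
        ring
      rw [hlast]
      have hzero : ∀ k ∈ range (j+1),
          ((h:ℚ)+1) * (w h k * ich (((-1:ℤ):ℚ) + ((h:ℚ)+1) * ((j+1-k : ℕ) : ℚ)) (j+1-k))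
          - (h:ℚ) * (w h k * ich (((0:ℤ):ℚ) + ((h:ℚ)+1) * ((j+1-k : ℕ) : ℚ)) (j+1-k)) = 0 := by
        intro k hk
        rw [Finset.mem_range] at hk
        have hm : j + 1 - k ≠ 0 := by omega
        have hs := ich_step h (j+1-k) hm
        have e1 : ((-1:ℤ):ℚ) + ((h:ℚ)+1) * ((j+1-k : ℕ) : ℚ) = ((h:ℚ)+1) * ((j+1-k : ℕ) : ℚ) - 1 := by
          push_cast; ring
        have e2 : ((0:ℤ):ℚ) + ((h:ℚ)+1) * ((j+1-k : ℕ) : ℚ) = ((h:ℚ)+1) * ((j+1-k : ℕ) : ℚ) := by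
          push_cast; ring
        rw [e1, e2]
        have : ((h:ℚ)+1) * ich (((h:ℚ)+1) * ((j+1-k : ℕ) : ℚ) - 1) (j+1-k)
            = (h:ℚ) * ich (((h:ℚ)+1) * ((j+1-k : ℕ) : ℚ)) (j+1-k) := hs
        linear_combination (w h k) * this
      rw [Finset.sum_eq_zero hzero, zero_add]
    have hpin2 : ((h:ℚ)+1) * Rj h (j+1) ((-1:ℤ):ℚ) - (h:ℚ) * Rj h (j+1) ((0:ℤ):ℚ) = w h (j+1) := by
      have := Rj_pin h (j+1) (by omega)
      norm_num at this ⊢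
      exact this
    have hD0 : D 0 = 0 := by
      have hm1 : D (-1) = D 0 := hconst (-1)
      simp only [hD] at hm1 ⊢
      nlinarith [hpin1, hpin2, hm1]
    intro c
    have := hconst c
    rw [hD0] at this
    simp only [hD] at this
    linarith [this]

/-- final coefficient values -/
lemma MC (h : ℕ) (hh : 0 < h) (j : ℕ) (hj : 1 ≤ j) :
    ∑ k ∈ range (j+1), (if k = 0 then 0 else w h k) *
        ((-1:ℚ)^(j-k) * ((h*k+2).choose (j-k) : ℚ))
      = if j = 1 then 1/((h:ℚ)+2) else if j = 2 then -(1/2) else 0 := by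
  have hmas := master h hh j (-(h*j+3) : ℤ)
  -- identify master's summand with choose-form
  have hsummand : ∀ k ∈ range (j+1),
      w h k * ich (((-(h*j+3) : ℤ):ℚ) + ((h:ℚ)+1) * ((j-k : ℕ) : ℚ)) (j-k)
      = w h k * ((-1:ℚ)^(j-k) * ((h*k+2).choose (j-k) : ℚ)) := by
    intro k hk
    rw [Finset.mem_range] at hk
    have harg : ((-(h*j+3) : ℤ):ℚ) + ((h:ℚ)+1) * ((j-k : ℕ) : ℚ)
        = ((j-k : ℕ):ℚ) - ((h*k+2 : ℕ):ℚ) - 1 := by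
      have e1 : ((j-k : ℕ):ℚ) = (j:ℚ) - (k:ℚ) := by
        push_cast [Nat.cast_sub (by omega : k ≤ j)]; ring
      rw [e1]; push_cast; ring
    rw [harg, neg_binom]
  simp only [S] at hmas
  rw [Finset.sum_congr rfl hsummand] at hmas
  -- split off k = 0 term
  have hsplit : ∑ k ∈ range (j+1), (if k = 0 then 0 else w h k) *
        ((-1:ℚ)^(j-k) * ((h*k+2).choose (j-k) : ℚ))
      = (∑ k ∈ range (j+1), w h k * ((-1:ℚ)^(j-k) * ((h*k+2).choose (j-k) : ℚ)))
        - w h 0 * ((-1:ℚ)^j * ((2:ℕ).choose j : ℚ)) := by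
    rw [Finset.sum_range_succ' (fun k => (if k = 0 then 0 else w h k) *
        ((-1:ℚ)^(j-k) * ((h*k+2).choose (j-k) : ℚ))) j,
      Finset.sum_range_succ' (fun k => w h k *
        ((-1:ℚ)^(j-k) * ((h*k+2).choose (j-k) : ℚ))) j]
    norm_num
  rw [hsplit, hmas]
  have hw0 : w h 0 = 1/2 := by simp [w]
  rw [hw0]
  have h2q : ((h:ℚ)+2) ≠ 0 := by positivity
  by_cases hj1 : j = 1
  · subst hj1
    simp only [Rj, if_neg one_ne_zero, if_pos rfl]
    simp only [Nat.sub_self, Finset.range_zero, Finset.prod_empty, Nat.factorial_one]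
    norm_num
    field_simp
    ring
  by_cases hj2 : j = 2
  · subst hj2
    have hR : Rj h 2 ((-((h:ℤ)*((2:ℕ):ℤ)+3) : ℤ):ℚ) = 0 := by
      simp only [Rj, if_neg (by norm_num : (2:ℕ) ≠ 0)]
      have hz : ((-((h:ℤ)*((2:ℕ):ℤ)+3) : ℤ):ℚ) + ((h:ℚ)+1)*((2:ℕ):ℚ) + 1 - ((0:ℕ):ℚ) = 0 := by
        push_cast; ring
      rw [Finset.prod_eq_zero (Finset.mem_range.mpr (by norm_num : (0:ℕ) < 2-1)) hz]
      ring
    rw [hR]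
    norm_num
  · -- j ≥ 3
    have hj3 : 3 ≤ j := by omega
    have hR : Rj h j ((-(((h:ℕ):ℤ)*(j:ℕ)+3) : ℤ):ℚ) = 0 := by
      simp only [Rj, if_neg (by omega : j ≠ 0)]
      have hmem : (j-2) ∈ Finset.range (j-1) := Finset.mem_range.mpr (by omega)
      have hz : ((-(((h:ℕ):ℤ)*(j:ℕ)+3) : ℤ):ℚ) + ((h:ℚ)+1)*((j:ℕ):ℚ) + 1 - ((j-2:ℕ):ℚ) = 0 := by
        rw [show ((j-2:ℕ):ℚ) = (j:ℚ)-2 by push_cast [Nat.cast_sub (by omega : 2 ≤ j)]; ring]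
        push_cast; ring
      rw [Finset.prod_eq_zero hmem hz]
      ring
    rw [hR]
    have hch : (2:ℕ).choose j = 0 := Nat.choose_eq_zero_of_lt (by omega)
    rw [hch]
    simp only [if_neg hj1, if_neg hj2]
    norm_num

end GenCatAux

namespace GenCatPS

open PowerSeries

variable {R : Type*} [CommRing R]

lemma coeff_pow_eq_zero {u : PowerSeries R} (hu : constantCoeff u = 0) :
    ∀ (k n : ℕ), n < k → coeff n (u ^ k) = 0 := by
  intro k
  induction k with
  | zero => intro n hn; omega
  | succ k IH =>
    intro n hn
    rw [pow_succ', coeff_mul]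
    apply Finset.sum_eq_zero
    intro p hp
    rw [HasAntidiagonal.mem_antidiagonal] at hp
    rcases Nat.eq_zero_or_pos p.1 with h0 | hpos
    · have : coeff p.1 u = 0 := by
        rw [h0]; rw [coeff_zero_eq_constantCoeff]; exact hu
      rw [this, zero_mul]
    · have : p.2 < k := by omega
      rw [IH p.2 this, mul_zero]

lemma coeff_mul_pscomp (v f u : PowerSeries R) (hu : constantCoeff u = 0) (N : ℕ) :
    coeff N (v * pscomp f u)
      = ∑ k ∈ range (N+1), coeff k f * coeff N (v * u ^ k) := by
  rw [coeff_mul]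
  have step1 : ∀ p ∈ HasAntidiagonal.antidiagonal N,
      coeff p.1 v * coeff p.2 (pscomp f u)
      = ∑ k ∈ range (N+1), coeff p.1 v * (coeff k f * coeff p.2 (u ^ k)) := by
    intro p hp
    rw [HasAntidiagonal.mem_antidiagonal] at hp
    have hple : p.2 + 1 ≤ N + 1 := by omega
    rw [pscomp, coeff_mk]
    rw [← Finset.sum_subset (Finset.range_subset_range.mpr hple)
      (fun k _ hk => by
        rw [Finset.mem_range, not_lt] at hk
        rw [coeff_pow_eq_zero hu k p.2 (by omega), mul_zero, mul_zero])]
    rw [Finset.mul_sum]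
  rw [Finset.sum_congr rfl step1, Finset.sum_comm]
  apply Finset.sum_congr rfl
  intro k _
  rw [coeff_mul, Finset.mul_sum]
  apply Finset.sum_congr rfl
  intro p _
  ring

end GenCatPS

namespace GenCatPS2
open PowerSeries

abbrev Rg := Polynomial ℚ
noncomputable abbrev PC : Rg →+* PowerSeries Rg := PowerSeries.C
noncomputable abbrev g : Rg := Polynomial.X
noncomputable def z (h : ℕ) : PowerSeries Rg :=
  PowerSeries.X * (1 - PC g * PowerSeries.X ^ h)

lemma zpow (h m : ℕ) :
    (z h) ^ m
    = ∑ l ∈ range (m+1),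
        PC ((-1:Rg)^l * (m.choose l : Rg) * g ^ l) * PowerSeries.X ^ (m + h*l) := by
  have h1 : (1 - PC g * PowerSeries.X ^ h) = (-(PC g * PowerSeries.X ^ h)) + 1 := by ring
  rw [z, mul_pow, h1, add_pow, Finset.mul_sum]
  apply Finset.sum_congr rfl
  intro l _
  rw [one_pow, neg_pow, mul_pow, ← pow_mul]
  rw [map_mul, map_mul, map_pow, map_pow, map_neg, map_one, map_natCast]
  rw [pow_add]
  ring

lemma coeff_czpow (h k N : ℕ) :
    (coeff N) (PC (g^k) * (z h) ^ (h*k+2))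
    = ∑ l ∈ range (h*k+3), if N = (h*k+2) + h*l
        then (-1:Rg)^l * ((h*k+2).choose l : Rg) * g ^ (k+l) else 0 := by
  rw [zpow, Finset.mul_sum, map_sum]
  apply Finset.sum_congr rfl
  intro l _
  rw [← mul_assoc, ← map_mul, coeff_C_mul_X_pow]
  have : g^k * ((-1:Rg)^l * ((h*k+2).choose l : Rg) * g ^ l)
      = (-1:Rg)^l * ((h*k+2).choose l : Rg) * g ^ (k+l) := by
    rw [pow_add]; ring
  rw [this]

end GenCatPS2

namespace GenCatPS3
open PowerSeries GenCatPS GenCatPS2 GenCatAux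

lemma coeff_gcgf (h k : ℕ) :
    coeff k (genCatalanGF' h) = if k = 0 then 0 else Polynomial.C (w h k) := by
  rw [genCatalanGF', coeff_mk]
  by_cases h0 : k = 0 <;> simp [h0, w]

theorem main (h : ℕ) (hh : 0 < h) :
    (z h) ^ 2 * pscomp (genCatalanGF' h) (PC g * (z h) ^ h) =
    PC (Polynomial.C (1 / 2 : ℚ)) * PowerSeries.X ^ 2 *
      (PC (Polynomial.C (2 / ((h : ℚ) + 2))) * (PC g * PowerSeries.X ^ h) -
        (PC g * PowerSeries.X ^ h) ^ 2) := by
  -- rearrange RHS into monomials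
  have hRHS : PC (Polynomial.C (1 / 2 : ℚ)) * PowerSeries.X ^ 2 *
      (PC (Polynomial.C (2 / ((h : ℚ) + 2))) * (PC g * PowerSeries.X ^ h) -
        (PC g * PowerSeries.X ^ h) ^ 2)
      = (PC (Polynomial.C (1 / 2 : ℚ)) * PC (Polynomial.C (2 / ((h : ℚ) + 2))) * PC g)
          * PowerSeries.X ^ (h+2)
        - (PC (Polynomial.C (1 / 2 : ℚ)) * PC g * PC g) * PowerSeries.X ^ (2*h+2) := by
    ring
  rw [hRHS]
  -- constant coefficient of u
  have hu : constantCoeff (PC g * (z h) ^ h) = 0 := by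
    have hz0 : constantCoeff (z h) = 0 := by
      rw [z]
      simp
    rw [map_mul, map_pow, hz0, zero_pow (by omega : h ≠ 0), mul_zero]
  apply PowerSeries.ext
  intro N
  rw [coeff_mul_pscomp _ _ _ hu N]
  -- rewrite each v * u^k term
  have hvu : ∀ k, (z h)^2 * (PC g * (z h)^h)^k = PC (g^k) * (z h)^(h*k+2) := by
    intro k
    rw [mul_pow, ← map_pow, ← pow_mul]
    ring
  have hterm : ∀ k, coeff k (genCatalanGF' h) * coeff N ((z h)^2 * (PC g * (z h)^h)^k)
      = (if k = 0 then 0 else Polynomial.C (w h k)) *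
          ∑ l ∈ range (h*k+3), (if N = (h*k+2) + h*l
            then (-1:Rg)^l * ((h*k+2).choose l : Rg) * g ^ (k+l) else 0) := by
    intro k
    rw [coeff_gcgf, hvu, coeff_czpow]
  rw [Finset.sum_congr rfl (fun k _ => hterm k)]
  -- coefficient of RHS
  have coeff_PC3 : ∀ (a b c : Rg) (p : ℕ),
      coeff N ((PC a * PC b * PC c) * PowerSeries.X ^ p) = if N = p then a*b*c else 0 := by
    intro a b c p
    rw [← map_mul, ← map_mul, coeff_C_mul_X_pow]
  rw [map_sub, coeff_PC3, coeff_PC3]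
  by_cases hex : ∃ j, 1 ≤ j ∧ N = h*j+2
  · obtain ⟨j, hj1, hjN⟩ := hex
    -- inner collapse
    have hinner : ∀ k ∈ range (N+1),
        (if k = 0 then 0 else Polynomial.C (w h k)) *
          ∑ l ∈ range (h*k+3), (if N = (h*k+2) + h*l
            then (-1:Rg)^l * ((h*k+2).choose l : Rg) * g ^ (k+l) else 0)
        = if k ≤ j then (if k = 0 then 0 else Polynomial.C (w h k)) *
            ((-1:Rg)^(j-k) * ((h*k+2).choose (j-k) : Rg) * g ^ j) else 0 := by
      intro k _
      by_cases hkj : k ≤ j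
      · rw [if_pos hkj]
        congr 1
        -- sum collapses to l = j - k, possibly out of range (then both sides 0)
        have hmulsub : h*(j-k) + h*k = h*j := by
          rw [← Nat.mul_add]
          congr 1
          omega
        by_cases hlin : j - k ≤ h*k+2
        · rw [Finset.sum_eq_single (j-k)]
          · rw [if_pos (by omega : N = h*k+2+h*(j-k)),
              show k + (j-k) = j from by omega]
          · intro l _ hlne
            rw [if_neg]
            intro hcon
            apply hlne
            have h2 : h*(k+l) = h*j := by rw [Nat.mul_add]; omega
            have := Nat.eq_of_mul_eq_mul_left hh h2
            omega
          · intro hnotin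
            exfalso
            apply hnotin
            rw [Finset.mem_range]
            omega
        · rw [Finset.sum_eq_zero, show ((h*k+2).choose (j-k) : Rg) = 0 from by
            rw [Nat.choose_eq_zero_of_lt (by omega)]; simp]
          · ring
          · intro l hl
            rw [Finset.mem_range] at hl
            rw [if_neg]
            intro hcon
            have h2 : h*(k+l) = h*j := by rw [Nat.mul_add]; omega
            have := Nat.eq_of_mul_eq_mul_left hh h2
            omega
      · rw [if_neg hkj]
        have : ∀ l ∈ range (h*k+3), (if N = (h*k+2) + h*l
            then (-1:Rg)^l * ((h*k+2).choose l : Rg) * g ^ (k+l) else 0) = 0 := by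
          intro l _
          rw [if_neg]
          subst hjN
          intro hcon
          have hk1 : j + 1 ≤ k := by omega
          have := Nat.mul_le_mul_left h hk1
          have h2 : h*(j+1) = h*j + h := by ring
          omega
        rw [Finset.sum_eq_zero this, mul_zero]
    rw [Finset.sum_congr rfl hinner]
    have hjN : j ≤ N := by
      have := Nat.le_mul_of_pos_left j hh
      omega
    have hsub : Finset.range (j+1) ⊆ Finset.range (N+1) :=
      Finset.range_subset_range.mpr (by omega)
    rw [← Finset.sum_subset hsub (fun k _ hk => by
      rw [Finset.mem_range, not_lt] at hk
      rw [if_neg (by omega : ¬ k ≤ j)])]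
    have hposres : ∀ k ∈ range (j+1),
        (if k ≤ j then (if k = 0 then 0 else Polynomial.C (w h k)) *
            ((-1:Rg)^(j-k) * ((h*k+2).choose (j-k) : Rg) * g ^ j) else 0)
        = Polynomial.C ((if k = 0 then 0 else w h k) *
            ((-1:ℚ)^(j-k) * (((h*k+2).choose (j-k) : ℕ) : ℚ))) * g ^ j := by
      intro k hk
      rw [Finset.mem_range] at hk
      rw [if_pos (by omega : k ≤ j)]
      rw [map_mul, map_mul, apply_ite Polynomial.C, map_zero, map_pow, map_neg, map_one,
        map_natCast]
      ring
    rw [Finset.sum_congr rfl hposres, ← Finset.sum_mul, ← map_sum, MC h hh j hj1]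
    -- now match with RHS coefficient
    by_cases hj1' : j = 1
    · subst hj1'
      rw [if_pos rfl]
      rw [if_pos (by omega : N = h + 2), if_neg (by omega : ¬ N = 2*h+2)]
      rw [sub_zero, pow_one]
      rw [show Polynomial.C (1/2:ℚ) * Polynomial.C (2/((h:ℚ)+2)) = Polynomial.C (1/((h:ℚ)+2))
        from by rw [← Polynomial.C_mul]; congr 1; ring]
    by_cases hj2' : j = 2
    · subst hj2'
      rw [if_neg hj1', if_pos rfl]
      rw [if_neg (by omega : ¬ N = h + 2), if_pos (by omega : N = 2*h+2)]
      rw [zero_sub, show Polynomial.C (-(1/2):ℚ) = -Polynomial.C (1/2:ℚ) from by rw [map_neg]]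
      ring
    · rw [if_neg hj1', if_neg hj2']
      rw [if_neg (by
          intro hcon
          apply hj1'
          have : h*j = h*1 := by omega
          have := Nat.eq_of_mul_eq_mul_left hh this
          omega),
        if_neg (by
          intro hcon
          apply hj2'
          have : h*j = h*2 := by omega
          have := Nat.eq_of_mul_eq_mul_left hh this
          omega)]
      simp
  · push_neg at hex
    have hallz : ∀ k ∈ range (N+1),
        (if k = 0 then 0 else Polynomial.C (w h k)) *
          ∑ l ∈ range (h*k+3), (if N = (h*k+2) + h*l
            then (-1:Rg)^l * ((h*k+2).choose l : Rg) * g ^ (k+l) else 0) = 0 := by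
      intro k _
      by_cases hk0 : k = 0
      · rw [if_pos hk0, zero_mul]
      · rw [Finset.sum_eq_zero, mul_zero]
        intro l _
        rw [if_neg]
        intro hcon
        exact absurd hcon (by
          have := hex (k + l) (by omega)
          rw [Nat.mul_add] at this
          omega)
    rw [Finset.sum_eq_zero hallz]
    rw [if_neg (by have := hex 1 le_rfl; omega), if_neg (by have := hex 2 (by omega); omega)]
    simp
end GenCatPS3

/-- With `z = x (1 - g x^h)`:
`z² A'_h(g z^h) = (x²/2) ((2/(h+2)) g x^h − (g x^h)²)` as formal power series
in `x` over `ℚ[g]`. -/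
theorem genCatalan_primitive_parametric (h : ℕ) (hh : 0 < h) :
    (PowerSeries.X *
        (1 - PowerSeries.C Polynomial.X * PowerSeries.X ^ h)) ^ 2 *
      pscomp (genCatalanGF' h)
        (PowerSeries.C Polynomial.X *
          (PowerSeries.X *
            (1 - PowerSeries.C Polynomial.X * PowerSeries.X ^ h)) ^ h) =
    PowerSeries.C (Polynomial.C (1 / 2 : ℚ)) * PowerSeries.X ^ 2 *
      (PowerSeries.C (Polynomial.C (2 / ((h : ℚ) + 2))) *
          (PowerSeries.C Polynomial.X * PowerSeries.X ^ h) -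
        (PowerSeries.C Polynomial.X * PowerSeries.X ^ h) ^ 2) := by
  have := GenCatPS3.main h hh
  simpa only [GenCatPS2.z, GenCatPS2.PC, GenCatPS2.g] using this
end

section
/- The generating function A_2 of the 3-Catalan numbers, satisfying A_2(q)=1+q·A_2(q)^3 with A_2(0)=1, obeys A_2(4x^2/27) = (3/x)·sin((1/3)·arcsin x) for 0 < x < 1. -/
set_option maxHeartbeats 1000000

open Nat Finset

noncomputable def fcA (a k : ℕ) : ℝ :=
  if a = 0 then (if k = 0 then 1 else 0)
  else a * (a + 3*k - 1)! / (k ! * (a + 2*k)!)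

lemma fcA_nonneg (a k : ℕ) : 0 ≤ fcA a k := by
  unfold fcA
  split
  · split <;> norm_num
  · positivity

lemma fcA_zero_right (a : ℕ) : fcA a 0 = 1 := by
  unfold fcA
  cases a with
  | zero => simp
  | succ b =>
    simp only [Nat.succ_ne_zero, if_false]
    have h1 : b + 1 + 3*0 - 1 = b := by omega
    have h2 : b + 1 + 2*0 = b + 1 := by omega
    rw [h1, h2, Nat.factorial_succ]
    have : (b ! : ℝ) ≠ 0 := Nat.cast_ne_zero.mpr (Nat.factorial_ne_zero b)
    push_cast
    field_simp
    simp

lemma cast_factorial_succ (n : ℕ) : ((n+1)! : ℝ) = (n+1) * (n ! : ℝ) := by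
  rw [Nat.factorial_succ]; push_cast; ring

lemma fcA_rec (a k : ℕ) : fcA (a+1) (k+1) = fcA a (k+1) + fcA (a+3) k := by
  cases a with
  | zero =>
    unfold fcA
    simp only [Nat.succ_ne_zero, if_false, if_true, reduceIte]
    have h1 : 0 + 1 + 3*(k+1) - 1 = (3*k + 2) + 1 := by omega
    have h2 : 0 + 1 + 2*(k+1) = 2*k + 3 := by omega
    have h3 : 0 + 3 + 3*k - 1 = 3*k + 2 := by omega
    have h4 : 0 + 3 + 2*k = 2*k + 3 := by omega
    rw [h1, h2, h3, h4]
    rw [cast_factorial_succ (3*k+2), cast_factorial_succ k]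
    have hk : (k ! : ℝ) ≠ 0 := Nat.cast_ne_zero.mpr (Nat.factorial_ne_zero k)
    have h1f : ((3*k+2)! : ℝ) ≠ 0 := Nat.cast_ne_zero.mpr (Nat.factorial_ne_zero _)
    have h2k : ((2*k+3)! : ℝ) ≠ 0 := Nat.cast_ne_zero.mpr (Nat.factorial_ne_zero _)
    push_cast
    field_simp
    ring
  | succ b =>
    unfold fcA
    simp only [Nat.succ_ne_zero, if_false, reduceIte]
    have h1 : b + 1 + 1 + 3*(k+1) - 1 = (b + 3*k + 3) + 1 := by omega
    have h2 : b + 1 + 1 + 2*(k+1) = (b + 2*k + 3) + 1 := by omega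
    have h3 : b + 1 + 3*(k+1) - 1 = b + 3*k + 3 := by omega
    have h4 : b + 1 + 2*(k+1) = b + 2*k + 3 := by omega
    have h5 : b + 1 + 3 + 3*k - 1 = b + 3*k + 3 := by omega
    have h6 : b + 1 + 3 + 2*k = (b + 2*k + 3) + 1 := by omega
    rw [h1, h2, h3, h4, h5, h6,
      cast_factorial_succ (b + 3*k + 3), cast_factorial_succ (b + 2*k + 3),
      cast_factorial_succ k]
    have hk : (k ! : ℝ) ≠ 0 := Nat.cast_ne_zero.mpr (Nat.factorial_ne_zero k)
    have hf1 : ((b + 3*k + 3)! : ℝ) ≠ 0 := Nat.cast_ne_zero.mpr (Nat.factorial_ne_zero _)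
    have hf2 : ((b + 2*k + 3)! : ℝ) ≠ 0 := Nat.cast_ne_zero.mpr (Nat.factorial_ne_zero _)
    push_cast
    field_simp
    ring

lemma fcA_zero_left_pos (k : ℕ) (hk : k ≠ 0) : fcA 0 k = 0 := by
  unfold fcA; simp [hk]

lemma sum_antidiagonal_succ {M : Type*} [AddCommMonoid M] (n : ℕ) (f : ℕ × ℕ → M) :
    ∑ p ∈ Finset.HasAntidiagonal.antidiagonal (n+1), f p
      = f (0, n+1) + ∑ p ∈ Finset.HasAntidiagonal.antidiagonal n, f (p.1 + 1, p.2) := by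
  rw [Finset.Nat.antidiagonal_succ, Finset.sum_cons, Finset.sum_map]
  rfl

lemma fcA_conv : ∀ k a c : ℕ,
    ∑ p ∈ Finset.HasAntidiagonal.antidiagonal k, fcA a p.1 * fcA c p.2 = fcA (a + c) k := by
  intro k
  induction k using Nat.strong_induction_on with
  | _ k ihk =>
    intro a
    induction a with
    | zero =>
      intro c
      rw [Finset.sum_eq_single (0, k)]
      · simp [fcA_zero_right]
      · rintro ⟨i, j⟩ hmem hne
        rw [Finset.HasAntidiagonal.mem_antidiagonal] at hmem
        have hi : i ≠ 0 := by rintro rfl; simp at hmem; subst hmem; exact hne rfl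
        rw [fcA_zero_left_pos i hi, zero_mul]
      · intro h
        exact absurd (Finset.HasAntidiagonal.mem_antidiagonal.mpr (by simp)) h
    | succ a iha =>
      intro c
      cases k with
      | zero => simp [fcA_zero_right]
      | succ m =>
        have e3 := iha c
        rw [sum_antidiagonal_succ] at e3
        have e2 := ihk m (Nat.lt_succ_self m) (a+3) c
        have e4 := fcA_rec (a+c) m
        rw [sum_antidiagonal_succ]
        have step : ∑ p ∈ Finset.HasAntidiagonal.antidiagonal m, fcA (a+1) (p.1+1) * fcA c p.2
            = ∑ p ∈ Finset.HasAntidiagonal.antidiagonal m,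
              (fcA a (p.1+1) * fcA c p.2 + fcA (a+3) p.1 * fcA c p.2) :=
          Finset.sum_congr rfl (fun p _ => by rw [fcA_rec]; ring)
        rw [step, Finset.sum_add_distrib, e2]
        simp only [fcA_zero_right, one_mul] at e3 ⊢
        have h7 : a + 1 + c = (a + c) + 1 := by ring
        have h8 : a + 3 + c = (a + c) + 3 := by ring
        rw [h7]
        rw [h8] at e2 ⊢
        linarith [e3, e4]

lemma fcA_one_succ (n : ℕ) : fcA 1 (n+1) = fcA 3 n := by
  have h0 : fcA 0 (n+1) = 0 := fcA_zero_left_pos _ (Nat.succ_ne_zero n)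
  have h := fcA_rec 0 n
  rw [h0] at h
  simpa using h

lemma cn_eq (n : ℕ) : (1 / (2 * (n : ℝ) + 1)) * (Nat.choose (3 * n) n : ℝ) = fcA 1 n := by
  have h : n ≤ 3 * n := by omega
  rw [Nat.cast_choose ℝ h]
  unfold fcA
  simp only [one_ne_zero, if_false, Nat.cast_one]
  have h1 : 1 + 3*n - 1 = 3*n := by omega
  have h2 : 3*n - n = 2*n := by omega
  have h3 : 1 + 2*n = (2*n) + 1 := by omega
  rw [h1, h2, h3, Nat.factorial_succ]
  have hn : (n ! : ℝ) ≠ 0 := Nat.cast_ne_zero.mpr (Nat.factorial_ne_zero _)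
  have h2n : ((2*n)! : ℝ) ≠ 0 := Nat.cast_ne_zero.mpr (Nat.factorial_ne_zero _)
  have h3n : ((3*n)! : ℝ) ≠ 0 := Nat.cast_ne_zero.mpr (Nat.factorial_ne_zero _)
  have h2n1 : (2*(n:ℝ) + 1) ≠ 0 := by positivity
  push_cast
  field_simp

lemma fact_ineq (n : ℕ) : (3*n)! * 4^n ≤ n ! * (2*n)! * 27^n := by
  induction n with
  | zero => simp
  | succ n ih =>
    have key : 4*((3*n+3)*((3*n+2)*(3*n+1))) ≤ 27*((n+1)*((2*n+2)*(2*n+1))) := by nlinarith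
    have e1 : 3*(n+1) = 3*n+1+1+1 := by ring
    have e2 : 2*(n+1) = 2*n+1+1 := by ring
    have l : (3*(n+1))! * 4^(n+1)
        = (4*((3*n+3)*((3*n+2)*(3*n+1)))) * ((3*n)! * 4^n) := by
      rw [e1]; simp only [Nat.factorial_succ, pow_succ]; ring
    have r : (n+1)! * (2*(n+1))! * 27^(n+1)
        = (27*((n+1)*((2*n+2)*(2*n+1)))) * (n ! * (2*n)! * 27^n) := by
      rw [e2]; simp only [Nat.factorial_succ, pow_succ]; ring
    rw [l, r]
    exact Nat.mul_le_mul key ih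

lemma fcA_one_le (n : ℕ) : fcA 1 n * (4/27)^n ≤ 1 := by
  unfold fcA
  simp only [one_ne_zero, if_false, Nat.cast_one]
  have h1 : 1 + 3*n - 1 = 3*n := by omega
  have h3 : 1 + 2*n = (2*n) + 1 := by omega
  rw [h1, h3]
  have hnat : (3*n)! * 4^n ≤ n ! * ((2*n)+1)! * 27^n := by
    calc (3*n)! * 4^n ≤ n ! * (2*n)! * 27^n := fact_ineq n
      _ ≤ n ! * ((2*n)+1)! * 27^n := by
          have := Nat.factorial_le (Nat.le_succ (2*n))
          exact Nat.mul_le_mul (Nat.mul_le_mul_left _ this) (le_refl _)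
  have hrw : (1:ℝ) * ((3*n)! : ℝ) / ((n ! : ℝ) * (((2*n)+1)! : ℝ)) * (4/27)^n
      = (((3*n)! * 4^n : ℕ) : ℝ) / (((n ! * ((2*n)+1)! * 27^n : ℕ)) : ℝ) := by
    rw [div_pow]
    push_cast
    field_simp
  rw [hrw]
  rw [div_le_one (by positivity)]
  exact_mod_cast hnat

lemma fcA_two_le (n : ℕ) : fcA 2 n * (4/27)^n ≤ (n : ℝ) + 1 := by
  have h := fcA_conv n 1 1
  norm_num at h
  rw [← h, Finset.sum_mul]
  have hb : ∀ p ∈ Finset.HasAntidiagonal.antidiagonal n, fcA 1 p.1 * fcA 1 p.2 * (4/27)^n ≤ 1 := by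
    intro p hp
    have hpn := Finset.HasAntidiagonal.mem_antidiagonal.mp hp
    have : fcA 1 p.1 * fcA 1 p.2 * (4/27:ℝ)^n
        = (fcA 1 p.1 * (4/27)^p.1) * (fcA 1 p.2 * (4/27)^p.2) := by
      rw [← hpn, pow_add]; ring
    rw [this]
    have b1 := fcA_one_le p.1
    have b2 := fcA_one_le p.2
    have n1 : 0 ≤ fcA 1 p.1 * (4/27:ℝ)^p.1 :=
      mul_nonneg (fcA_nonneg 1 p.1) (by positivity)
    have n2 : 0 ≤ fcA 1 p.2 * (4/27:ℝ)^p.2 :=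
      mul_nonneg (fcA_nonneg 1 p.2) (by positivity)
    calc fcA 1 p.1 * (4/27:ℝ)^p.1 * (fcA 1 p.2 * (4/27)^p.2) ≤ 1 * 1 :=
          mul_le_mul b1 b2 n2 zero_le_one
      _ = 1 := by norm_num
  calc ∑ p ∈ Finset.HasAntidiagonal.antidiagonal n, fcA 1 p.1 * fcA 1 p.2 * (4/27:ℝ)^n
      ≤ ∑ p ∈ Finset.HasAntidiagonal.antidiagonal n, (1:ℝ) := Finset.sum_le_sum hb
    _ = (n : ℝ) + 1 := by
        rw [Finset.sum_const, Finset.Nat.card_antidiagonal]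
        push_cast; ring

/-- Disjointness of antidiagonals -/
lemma antidiag_pairwise (n : ℕ) :
    (↑(Finset.range n) : Set ℕ).PairwiseDisjoint Finset.HasAntidiagonal.antidiagonal := by
  intro i _ j _ hij
  simp only [Finset.disjoint_left]
  rintro ⟨a, b⟩ ha hb
  rw [Finset.HasAntidiagonal.mem_antidiagonal] at ha hb
  exact hij (by omega)

lemma sum_range_antidiag_le (u v : ℕ → ℝ) (hu : ∀ i, 0 ≤ u i) (hv : ∀ i, 0 ≤ v i) (n : ℕ) :
    ∑ i ∈ Finset.range n, ∑ p ∈ Finset.HasAntidiagonal.antidiagonal i, u p.1 * v p.2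
      ≤ (∑ i ∈ Finset.range n, u i) * (∑ i ∈ Finset.range n, v i) := by
  rw [Finset.sum_mul_sum, ← Finset.sum_product', ← Finset.sum_biUnion (antidiag_pairwise n)]
  apply Finset.sum_le_sum_of_subset_of_nonneg
  · intro p hp
    rw [Finset.mem_biUnion] at hp
    obtain ⟨i, hi, hpi⟩ := hp
    rw [Finset.mem_range] at hi
    rw [Finset.HasAntidiagonal.mem_antidiagonal] at hpi
    rw [Finset.mem_product, Finset.mem_range, Finset.mem_range]
    omega
  · intro p _ _
    exact mul_nonneg (hu p.1) (hv p.2)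

lemma coeff_mul (a c : ℕ) (q : ℝ) (n : ℕ) :
    ∑ p ∈ Finset.HasAntidiagonal.antidiagonal n, (fcA a p.1 * q^p.1) * (fcA c p.2 * q^p.2)
      = fcA (a+c) n * q^n := by
  rw [← fcA_conv n a c, Finset.sum_mul]
  apply Finset.sum_congr rfl
  intro p hp
  have hpn := Finset.HasAntidiagonal.mem_antidiagonal.mp hp
  rw [← hpn, pow_add]; ring

lemma cubic_root_eq (u v : ℝ) (hu : u ≠ 0) (h : u = 3*v - 4*v^3) :
    3/u*v = 1 + (4*u^2/27) * (3/u*v)^3 := by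
  field_simp
  linear_combination (-27) * h

/-- For `0 < x < 1`, the generating function of the 3-Catalan numbers satisfies
`A_2(4x²/27) = (3/x) sin((1/3) arcsin x)`. -/
theorem a2_trigonometric (x : ℝ) (hx : 0 < x) (hx1 : x < 1) :
    ∑' n : ℕ, (1 / (2 * (n : ℝ) + 1)) * (Nat.choose (3 * n) n : ℝ) *
        (4 * x ^ 2 / 27) ^ n =
      (3 / x) * Real.sin ((1 / 3) * Real.arcsin x) := by
  -- basic facts about x and q
  have hx2 : x^2 < 1 := by nlinarith
  obtain ⟨q, hq_def⟩ : ∃ q : ℝ, q = 4 * x ^ 2 / 27 := ⟨_, rfl⟩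
  simp only [← hq_def]
  have hq0 : 0 < q := by rw [hq_def]; positivity
  have hq27 : q < 4/27 := by rw [hq_def]; nlinarith
  have hqsplit : ∀ n : ℕ, q ^ n = (4/27)^n * (x^2)^n := by
    intro n
    rw [hq_def, ← mul_pow]
    congr 1
    ring
  -- the coefficient sequences
  obtain ⟨g1, hg1⟩ : ∃ g : ℕ → ℝ, g = fun n => fcA 1 n * q^n := ⟨_, rfl⟩
  obtain ⟨g2, hg2⟩ : ∃ g : ℕ → ℝ, g = fun n => fcA 2 n * q^n := ⟨_, rfl⟩
  obtain ⟨g3, hg3⟩ : ∃ g : ℕ → ℝ, g = fun n => fcA 3 n * q^n := ⟨_, rfl⟩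
  have hg1nonneg : ∀ n, 0 ≤ g1 n := fun n => by
    rw [hg1]; exact mul_nonneg (fcA_nonneg 1 n) (pow_nonneg hq0.le n)
  have hg2nonneg : ∀ n, 0 ≤ g2 n := fun n => by
    rw [hg2]; exact mul_nonneg (fcA_nonneg 2 n) (pow_nonneg hq0.le n)
  have hg3nonneg : ∀ n, 0 ≤ g3 n := fun n => by
    rw [hg3]; exact mul_nonneg (fcA_nonneg 3 n) (pow_nonneg hq0.le n)
  have hg1le : ∀ n, g1 n ≤ (x^2)^n := by
    intro n
    rw [hg1]
    simp only
    rw [hqsplit n, ← mul_assoc]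
    have := fcA_one_le n
    nlinarith [pow_nonneg (sq_nonneg x) n]
  have hg2le : ∀ n, g2 n ≤ ((n:ℝ)+1) * (x^2)^n := by
    intro n
    rw [hg2]
    simp only
    rw [hqsplit n, ← mul_assoc]
    have := fcA_two_le n
    nlinarith [pow_nonneg (sq_nonneg x) n]
  -- summability
  have hgeo : Summable (fun n : ℕ => (x^2)^n) :=
    summable_geometric_of_lt_one (sq_nonneg x) hx2
  have hgeo1 : Summable (fun n : ℕ => ((n:ℝ)+1) * (x^2)^n) := by
    have h1 : Summable (fun n : ℕ => (n:ℝ) * (x^2)^n) := by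
      have := summable_pow_mul_geometric_of_norm_lt_one 1 (r := x^2)
        (by rw [Real.norm_eq_abs, abs_of_nonneg (sq_nonneg x)]; exact hx2)
      simpa using this
    have := h1.add hgeo
    convert this using 2 with n
    ring
  have hsum1 : Summable g1 :=
    Summable.of_nonneg_of_le hg1nonneg hg1le hgeo
  have hsum2 : Summable g2 :=
    Summable.of_nonneg_of_le hg2nonneg hg2le hgeo1
  have hnorm1 : Summable (fun n => ‖g1 n‖) := by
    simpa [Real.norm_eq_abs, abs_of_nonneg (hg1nonneg _)] using hsum1
  have hnorm2 : Summable (fun n => ‖g2 n‖) := by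
    simpa [Real.norm_eq_abs, abs_of_nonneg (hg2nonneg _)] using hsum2
  obtain ⟨F, hF_def⟩ : ∃ F : ℝ, F = ∑' n, g1 n := ⟨_, rfl⟩
  -- Cauchy products
  have hFF : F * F = ∑' n, g2 n := by
    rw [hF_def, tsum_mul_tsum_eq_tsum_sum_antidiagonal_of_summable_norm hnorm1 hnorm1]
    apply tsum_congr
    intro n
    rw [hg1, hg2]
    simp only
    exact coeff_mul 1 1 q n
  have hsum3 : Summable g3 := by
    have h := (summable_norm_sum_mul_antidiagonal_of_summable_norm hnorm2 hnorm1).of_norm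
    apply h.congr
    intro n
    rw [hg2, hg1, hg3]
    simp only
    exact coeff_mul 2 1 q n
  have hFFF : F^3 = ∑' n, g3 n := by
    have h3 : F^3 = (F * F) * F := by ring
    rw [h3, hFF, hF_def,
      tsum_mul_tsum_eq_tsum_sum_antidiagonal_of_summable_norm hnorm2 hnorm1]
    apply tsum_congr
    intro n
    rw [hg2, hg1, hg3]
    simp only
    exact coeff_mul 2 1 q n
  have hg10 : g1 0 = 1 := by rw [hg1]; simp [fcA_zero_right]
  have hshiftterm : ∀ n : ℕ, g1 (n+1) = q * g3 n := by
    intro n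
    rw [hg1, hg3]
    simp only
    rw [fcA_one_succ]
    ring
  have hF_eq : F = 1 + q * F^3 := by
    rw [hFFF]
    calc F = g1 0 + ∑' n, g1 (n+1) := by rw [hF_def]; exact hsum1.tsum_eq_zero_add
      _ = 1 + ∑' n, q * g3 n := by rw [hg10, tsum_congr hshiftterm]
      _ = 1 + q * ∑' n, g3 n := by rw [tsum_mul_left]
  -- trigonometric side
  have hpi := Real.pi_pos
  have harc0 : 0 < Real.arcsin x := Real.arcsin_pos.mpr hx
  have harc2 : Real.arcsin x < Real.pi/2 := Real.arcsin_lt_pi_div_two.mpr hx1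
  obtain ⟨t, ht_def, ht0, ht2, hx3⟩ :
      ∃ t : ℝ, Real.sin ((1 / 3) * Real.arcsin x) = t ∧ 0 < t ∧ t < 1/2 ∧ x = 3*t - 4*t^3 := by
    refine ⟨_, rfl, ?_, ?_, ?_⟩
    · exact Real.sin_pos_of_pos_of_lt_pi (by positivity) (by nlinarith)
    · have hmem1 : (1/3) * Real.arcsin x ∈ Set.Icc (-(Real.pi/2)) (Real.pi/2) := by
        constructor <;> nlinarith
      have hmem2 : Real.pi/6 ∈ Set.Icc (-(Real.pi/2)) (Real.pi/2) := by
        constructor <;> nlinarith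
      have hlt : (1/3) * Real.arcsin x < Real.pi/6 := by nlinarith
      have h := Real.strictMonoOn_sin hmem1 hmem2 hlt
      rwa [Real.sin_pi_div_six] at h
    · have h := Real.sin_three_mul ((1/3) * Real.arcsin x)
      have h3 : 3 * ((1/3) * Real.arcsin x) = Real.arcsin x := by ring
      rw [h3, Real.sin_arcsin (by linarith) hx1.le] at h
      exact h
  have hxne : x ≠ 0 := ne_of_gt hx
  rw [ht_def]
  obtain ⟨y, hy_val, hy1, hy32, hy_eq⟩ :
      ∃ y : ℝ, 3 / x * t = y ∧ 1 ≤ y ∧ y < 3/2 ∧ y = 1 + q * y^3 := by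
    refine ⟨_, rfl, ?_, ?_, ?_⟩
    · rw [div_mul_eq_mul_div, le_div_iff₀ hx]
      nlinarith [pow_pos ht0 3]
    · rw [div_mul_eq_mul_div, div_lt_iff₀ hx]
      have ht3 : t^3 < t/4 := by
        nlinarith [mul_lt_mul_of_pos_left (show t^2 < 1/4 by nlinarith) ht0]
      linarith
    · rw [hq_def]
      exact cubic_root_eq x t hxne hx3
  rw [hy_val]
  -- partial sums bounded by y
  have hpartial : ∀ N, ∑ i ∈ Finset.range N, g1 i ≤ y := by
    intro N
    induction N with
    | zero => simp; linarith
    | succ N ih =>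
      have hs1nonneg : 0 ≤ ∑ i ∈ Finset.range N, g1 i :=
        Finset.sum_nonneg fun i _ => hg1nonneg i
      have h2le : ∑ i ∈ Finset.range N, g2 i ≤ (∑ i ∈ Finset.range N, g1 i)^2 := by
        have e2 : ∀ i, g2 i = ∑ p ∈ Finset.HasAntidiagonal.antidiagonal i, g1 p.1 * g1 p.2 := by
          intro i
          rw [hg2, hg1]
          simp only
          exact (coeff_mul 1 1 q i).symm
        calc ∑ i ∈ Finset.range N, g2 i
            = ∑ i ∈ Finset.range N, ∑ p ∈ Finset.HasAntidiagonal.antidiagonal i, g1 p.1 * g1 p.2 :=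
              Finset.sum_congr rfl fun i _ => e2 i
          _ ≤ (∑ i ∈ Finset.range N, g1 i) * (∑ i ∈ Finset.range N, g1 i) :=
              sum_range_antidiag_le g1 g1 hg1nonneg hg1nonneg N
          _ = (∑ i ∈ Finset.range N, g1 i)^2 := by ring
      have hs3 : ∑ i ∈ Finset.range N, g3 i ≤ (∑ i ∈ Finset.range N, g1 i)^3 := by
        have e3 : ∀ i, g3 i = ∑ p ∈ Finset.HasAntidiagonal.antidiagonal i, g2 p.1 * g1 p.2 := by
          intro i
          rw [hg2, hg1, hg3]
          simp only
          exact (coeff_mul 2 1 q i).symm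
        calc ∑ i ∈ Finset.range N, g3 i
            = ∑ i ∈ Finset.range N, ∑ p ∈ Finset.HasAntidiagonal.antidiagonal i, g2 p.1 * g1 p.2 :=
              Finset.sum_congr rfl fun i _ => e3 i
          _ ≤ (∑ i ∈ Finset.range N, g2 i) * (∑ i ∈ Finset.range N, g1 i) :=
              sum_range_antidiag_le g2 g1 hg2nonneg hg1nonneg N
          _ ≤ (∑ i ∈ Finset.range N, g1 i)^2 * (∑ i ∈ Finset.range N, g1 i) :=
              mul_le_mul_of_nonneg_right h2le hs1nonneg
          _ = (∑ i ∈ Finset.range N, g1 i)^3 := by ring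
      have step : ∑ i ∈ Finset.range (N+1), g1 i = 1 + q * ∑ i ∈ Finset.range N, g3 i := by
        rw [Finset.sum_range_succ']
        rw [Finset.sum_congr rfl (fun i _ => hshiftterm i), ← Finset.mul_sum, hg10]
        ring
      rw [step]
      have hcube : (∑ i ∈ Finset.range N, g1 i)^3 ≤ y^3 :=
        pow_le_pow_left₀ hs1nonneg ih 3
      have hmul : q * ∑ i ∈ Finset.range N, g3 i ≤ q * y^3 :=
        mul_le_mul_of_nonneg_left (hs3.trans hcube) hq0.le
      linarith [hy_eq]
  have hFy : F ≤ y := by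
    rw [hF_def]; exact Real.tsum_le_of_sum_range_le hg1nonneg hpartial
  have hF1 : 1 ≤ F := by
    have h := Summable.sum_le_tsum (Finset.range 1) (fun i _ => hg1nonneg i) hsum1
    rw [Finset.sum_range_one, hg10] at h
    rw [hF_def]; exact h
  -- uniqueness of the root
  have hF32 : F < 3/2 := lt_of_le_of_lt hFy hy32
  have hfac : (y - F) * (1 - q*(y^2 + y*F + F^2)) = 0 := by
    linear_combination hy_eq - hF_eq
  have hy0 : (0:ℝ) ≤ y := le_trans zero_le_one hy1
  have hF0 : (0:ℝ) ≤ F := le_trans zero_le_one hF1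
  have hsumsq : 0 ≤ y^2 + y*F + F^2 :=
    add_nonneg (add_nonneg (sq_nonneg y) (mul_nonneg hy0 hF0)) (sq_nonneg F)
  have hsumlt : y^2 + y*F + F^2 < 27/4 := by
    have h1 : y^2 < (3/2:ℝ)^2 := by nlinarith
    have h2 : F^2 < (3/2:ℝ)^2 := by nlinarith
    have h3 : y*F ≤ y*y := mul_le_mul_of_nonneg_left hFy hy0
    nlinarith
  have hqs : q * (y^2 + y*F + F^2) < 1 := by
    have := mul_lt_mul'' hq27 hsumlt hq0.le hsumsq
    linarith [this]
  have hFeqy : F = y := by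
    rcases mul_eq_zero.mp hfac with h | h
    · linarith
    · linarith
  -- conclude
  have hLHS : ∑' n : ℕ, (1 / (2 * (n : ℝ) + 1)) * (Nat.choose (3 * n) n : ℝ) * q ^ n = F := by
    rw [hF_def]
    apply tsum_congr
    intro n
    rw [hg1]
    simp only
    rw [cn_eq]
  rw [hLHS, hFeqy]
end

section
/- For any integer n with n > −1/2, the Catalan number C_n satisfies C_n = (1/(2π)) ∫_{1/4}^{∞} sqrt(4x−1) · x^{−n−2} dx; in particular for all natural numbers n, this integral equals (1/(n+1))·binom(2n,n). -/
open MeasureTheory Real Set Filter Topology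

lemma cc_rpow_eq (n : ℕ) {x : ℝ} (hx : 0 < x) :
    x ^ (-(n : ℝ) - 2) = (x ^ (n + 2) : ℝ)⁻¹ := by
  rw [show -(n : ℝ) - 2 = -((n + 2 : ℕ) : ℝ) by push_cast; ring,
    Real.rpow_neg hx.le, Real.rpow_natCast]

lemma cc_hasDerivAt_s {x : ℝ} (hx : 1 / 4 < x) :
    HasDerivAt (fun y : ℝ => Real.sqrt (4 * y - 1)) (2 / Real.sqrt (4 * x - 1)) x := by
  have h4 : (0 : ℝ) < 4 * x - 1 := by linarith
  have hs : Real.sqrt (4 * x - 1) ≠ 0 := by positivity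
  have hg : HasDerivAt (fun y : ℝ => 4 * y - 1) 4 x := by
    simpa using ((hasDerivAt_id x).const_mul 4).sub_const 1
  have := (Real.hasDerivAt_sqrt h4.ne').comp x hg
  refine this.congr_deriv ?_
  field_simp
  ring

lemma cc_sqrt_le {x : ℝ} (hx : 1 / 4 < x) : Real.sqrt (4 * x - 1) ≤ 2 * Real.sqrt x := by
  rw [show (2 : ℝ) * Real.sqrt x = Real.sqrt (4 * x) by
    rw [show (4 : ℝ) * x = 2 ^ 2 * x by ring, Real.sqrt_mul (by positivity),
      Real.sqrt_sq (by norm_num)]]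
  exact Real.sqrt_le_sqrt (by linarith)

lemma cc_integrable (n : ℕ) :
    IntegrableOn (fun x : ℝ => Real.sqrt (4 * x - 1) * x ^ (-(n : ℝ) - 2))
      (Ioi (1 / 4 : ℝ)) := by
  have hexp : (-(n : ℝ) - 2 + 1 / 2) < -1 := by
    have : (0 : ℝ) ≤ n := Nat.cast_nonneg n
    linarith
  have hb : IntegrableOn (fun x : ℝ => 2 * x ^ (-(n : ℝ) - 2 + 1 / 2)) (Ioi (1 / 4 : ℝ)) :=
    (integrableOn_Ioi_rpow_of_lt hexp (by norm_num)).const_mul 2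
  refine hb.mono' ?_ ?_
  · refine ContinuousOn.aestronglyMeasurable (ContinuousOn.mul ?_ ?_) measurableSet_Ioi
    · exact (Real.continuous_sqrt.comp (by continuity)).continuousOn
    · intro x hx
      exact (Real.continuousAt_rpow_const x _
        (Or.inl (by have : (1:ℝ)/4 < x := hx; positivity))).continuousWithinAt
  · filter_upwards [ae_restrict_mem measurableSet_Ioi] with x hx
    have hx' : (1 : ℝ) / 4 < x := hx
    have hx0 : (0 : ℝ) < x := by linarith
    have hrw : Real.sqrt x * x ^ (-(n : ℝ) - 2) = x ^ (-(n : ℝ) - 2 + 1 / 2) := by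
      rw [Real.sqrt_eq_rpow, ← Real.rpow_add hx0]; ring_nf
    rw [Real.norm_eq_abs, abs_of_nonneg (by positivity)]
    calc Real.sqrt (4 * x - 1) * x ^ (-(n : ℝ) - 2)
        ≤ 2 * Real.sqrt x * x ^ (-(n : ℝ) - 2) :=
          mul_le_mul_of_nonneg_right (cc_sqrt_le hx') (by positivity)
      _ = 2 * x ^ (-(n : ℝ) - 2 + 1 / 2) := by rw [mul_assoc, hrw]

lemma cc_base :
    ∫ x in Ioi (1 / 4 : ℝ), Real.sqrt (4 * x - 1) * x ^ (-((0:ℕ) : ℝ) - 2) = 2 * π := by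
  set F : ℝ → ℝ := fun y => -(Real.sqrt (4 * y - 1) / y) + 4 * Real.arctan (Real.sqrt (4 * y - 1))
    with hF
  have hderiv : ∀ x ∈ Ioi (1 / 4 : ℝ),
      HasDerivAt F (Real.sqrt (4 * x - 1) * x ^ (-((0:ℕ) : ℝ) - 2)) x := by
    intro x hx
    have hx' : (1 : ℝ) / 4 < x := hx
    have hx0 : (0 : ℝ) < x := by linarith
    have h4 : (0 : ℝ) < 4 * x - 1 := by linarith
    set s := Real.sqrt (4 * x - 1) with hs'
    have hs : s ≠ 0 := by positivity
    have hs2 : s ^ 2 = 4 * x - 1 := Real.sq_sqrt h4.le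
    have h1 : HasDerivAt (fun y : ℝ => Real.sqrt (4 * y - 1) / y)
        ((2 / s * x - s * 1) / x ^ 2) x := (cc_hasDerivAt_s hx').div (hasDerivAt_id x) hx0.ne'
    have h2 : HasDerivAt (fun y : ℝ => Real.arctan (Real.sqrt (4 * y - 1)))
        (1 / (1 + s ^ 2) * (2 / s)) x := (Real.hasDerivAt_arctan _).comp x (cc_hasDerivAt_s hx')
    have h := h1.neg.add (h2.const_mul 4)
    refine h.congr_deriv ?_
    rw [cc_rpow_eq 0 hx0, hs2]
    field_simp
    ring
  have hcont : ContinuousWithinAt F (Ici (1 / 4 : ℝ)) (1 / 4) := by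
    apply ContinuousAt.continuousWithinAt
    have hsc : Continuous fun y : ℝ => Real.sqrt (4 * y - 1) := by
      exact Real.continuous_sqrt.comp (by continuity)
    exact ((hsc.continuousAt.div continuousAt_id (by norm_num)).neg).add
      ((Real.continuous_arctan.comp hsc).continuousAt.const_mul 4)
  have htop : Tendsto F atTop (𝓝 (2 * π)) := by
    have t1 : Tendsto (fun y : ℝ => Real.sqrt (4 * y - 1) / y) atTop (𝓝 0) := by
      apply squeeze_zero' (g := fun y : ℝ => 2 * y ^ (-(1 : ℝ) / 2))
      · filter_upwards [eventually_gt_atTop (1 / 4 : ℝ)] with y hy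
        positivity
      · filter_upwards [eventually_ge_atTop (1 : ℝ)] with y hy
        have hy0 : (0 : ℝ) < y := by linarith
        have : Real.sqrt (4 * y - 1) ≤ 2 * Real.sqrt y := cc_sqrt_le (by linarith)
        have h2 : Real.sqrt y / y = y ^ (-(1 : ℝ) / 2) := by
          rw [Real.sqrt_eq_rpow, div_eq_mul_inv, ← Real.rpow_neg_one y,
            ← Real.rpow_add hy0]
          norm_num
        calc Real.sqrt (4 * y - 1) / y ≤ 2 * Real.sqrt y / y := by gcongr
          _ = 2 * (Real.sqrt y / y) := by ring
          _ = 2 * y ^ (-(1 : ℝ) / 2) := by rw [h2]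
      · have := (tendsto_rpow_neg_atTop (by norm_num : (0:ℝ) < 1/2)).const_mul (2 : ℝ)
        simpa [neg_div] using this
    have t2 : Tendsto (fun y : ℝ => Real.arctan (Real.sqrt (4 * y - 1))) atTop (𝓝 (π / 2)) := by
      apply (tendsto_nhds_of_tendsto_nhdsWithin Real.tendsto_arctan_atTop).comp
      have hsq : Tendsto Real.sqrt atTop atTop := by
        have := tendsto_rpow_atTop (by norm_num : (0:ℝ) < 1/2)
        simpa only [← Real.sqrt_eq_rpow] using this
      exact hsq.comp (tendsto_atTop_add_const_right _ _
        (tendsto_id.const_mul_atTop (by norm_num)))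
    have h := (t1.neg).add (t2.const_mul 4)
    rw [show (2 * π : ℝ) = -0 + 4 * (π / 2) by ring]
    exact h
  have h := integral_Ioi_of_hasDerivAt_of_tendsto hcont hderiv
    ((cc_integrable 0).congr_fun (by intro x hx; rfl) measurableSet_Ioi) htop
  rw [h, hF]
  norm_num

lemma cc_rec (n : ℕ) :
    ((n : ℝ) + 2) * ∫ x in Ioi (1 / 4 : ℝ), Real.sqrt (4 * x - 1) * x ^ (-((n : ℝ) + 1) - 2)
      = (4 * (n : ℝ) + 2) * ∫ x in Ioi (1 / 4 : ℝ), Real.sqrt (4 * x - 1) * x ^ (-(n : ℝ) - 2) := by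
  have hcast : -((n : ℝ) + 1) - 2 = -(((n + 1 : ℕ) : ℝ)) - 2 := by push_cast; ring
  set G : ℝ → ℝ := fun y => Real.sqrt (4 * y - 1) ^ 3 * (y ^ (n + 2))⁻¹ with hG
  set f' : ℝ → ℝ := fun x => -(4 * (n : ℝ) + 2) * (Real.sqrt (4 * x - 1) * x ^ (-(n : ℝ) - 2))
      + ((n : ℝ) + 2) * (Real.sqrt (4 * x - 1) * x ^ (-((n : ℝ) + 1) - 2)) with hf'
  have hi1 : IntegrableOn (fun x : ℝ => Real.sqrt (4 * x - 1) * x ^ (-(n : ℝ) - 2))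
      (Ioi (1 / 4 : ℝ)) := cc_integrable n
  have hi2 : IntegrableOn (fun x : ℝ => Real.sqrt (4 * x - 1) * x ^ (-((n : ℝ) + 1) - 2))
      (Ioi (1 / 4 : ℝ)) := by
    have := cc_integrable (n + 1); push_cast at this; exact this
  have hderiv : ∀ x ∈ Ioi (1 / 4 : ℝ), HasDerivAt G (f' x) x := by
    intro x hx
    have hx' : (1 : ℝ) / 4 < x := hx
    have hx0 : (0 : ℝ) < x := by linarith
    have h4 : (0 : ℝ) < 4 * x - 1 := by linarith
    set s := Real.sqrt (4 * x - 1) with hs'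
    have hs : s ≠ 0 := by positivity
    have hs2 : s ^ 2 = 4 * x - 1 := Real.sq_sqrt h4.le
    have hpow : HasDerivAt (fun y : ℝ => (y ^ (n + 2))⁻¹)
        (-(((n + 2 : ℕ) : ℝ) * x ^ (n + 1)) / (x ^ (n + 2)) ^ 2) x := by
      simpa [Pi.inv_def] using (hasDerivAt_pow (n + 2) x).inv (pow_ne_zero _ hx0.ne')
    have hcube : HasDerivAt (fun y : ℝ => Real.sqrt (4 * y - 1) ^ 3)
        ((3 : ℕ) * s ^ 2 * (2 / s)) x := by
      simpa [Pi.pow_def] using (cc_hasDerivAt_s hx').pow 3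
    have h := hcube.mul hpow
    have e1 : x ^ (-(n : ℝ) - 2) = (x ^ (n + 2) : ℝ)⁻¹ := cc_rpow_eq n hx0
    have e2 : x ^ (-((n : ℝ) + 1) - 2) = (x ^ (n + 3) : ℝ)⁻¹ := by
      rw [hcast, cc_rpow_eq (n + 1) hx0]
    have h6 : (3 : ℕ) * s ^ 2 * (2 / s) = 6 * s := by field_simp; ring
    have h3 : s ^ 3 = (4 * x - 1) * s := by
      rw [show s ^ 3 = s ^ 2 * s by ring, hs2]
    rw [h6] at h
    refine h.congr_deriv ?_
    rw [hf']
    simp only [e1, e2, ← hs', h3]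
    push_cast
    field_simp
    ring
  have hcont : ContinuousWithinAt G (Ici (1 / 4 : ℝ)) (1 / 4) := by
    apply ContinuousAt.continuousWithinAt
    have hsc : Continuous fun y : ℝ => Real.sqrt (4 * y - 1) :=
      Real.continuous_sqrt.comp (by continuity)
    exact ((hsc.pow 3).continuousAt).mul
      (((continuousAt_id.pow (n + 2))).inv₀ (pow_ne_zero _ (by norm_num)))
  have htop : Tendsto G atTop (𝓝 0) := by
    apply squeeze_zero' (g := fun y : ℝ => 8 * y ^ (-(1 : ℝ) / 2))
    · filter_upwards [eventually_gt_atTop (1 / 4 : ℝ)] with y hy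
      have : (0:ℝ) < y := by linarith
      positivity
    · filter_upwards [eventually_ge_atTop (1 : ℝ)] with y hy
      have hy0 : (0 : ℝ) < y := by linarith
      have hle : Real.sqrt (4 * y - 1) ≤ 2 * Real.sqrt y := cc_sqrt_le (by linarith)
      have hmono : ((y : ℝ) ^ (n + 2))⁻¹ ≤ (y ^ 2)⁻¹ := by
        apply inv_anti₀ (by positivity)
        exact pow_le_pow_right₀ hy (by omega)
      calc Real.sqrt (4 * y - 1) ^ 3 * (y ^ (n + 2))⁻¹
          ≤ (2 * Real.sqrt y) ^ 3 * (y ^ (n + 2))⁻¹ := by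
            gcongr
        _ ≤ (2 * Real.sqrt y) ^ 3 * (y ^ 2)⁻¹ :=
            mul_le_mul_of_nonneg_left hmono (by positivity)
        _ = 8 * y ^ (-(1 : ℝ) / 2) := by
            rw [mul_pow, Real.sqrt_eq_rpow, ← Real.rpow_natCast (y ^ ((1:ℝ)/2)) 3,
              ← Real.rpow_mul hy0.le, ← Real.rpow_natCast y 2, ← Real.rpow_neg hy0.le,
              mul_assoc, ← Real.rpow_add hy0]
            norm_num
    · have := (tendsto_rpow_neg_atTop (by norm_num : (0:ℝ) < 1/2)).const_mul (8 : ℝ)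
      simpa [neg_div] using this
  have hint : IntegrableOn f' (Ioi (1 / 4 : ℝ)) :=
    (hi1.const_mul _).add (hi2.const_mul _)
  have h0 := integral_Ioi_of_hasDerivAt_of_tendsto hcont hderiv hint htop
  have hG0 : G (1 / 4 : ℝ) = 0 := by
    rw [hG]
    norm_num
  rw [hG0, hf'] at h0
  rw [integral_add (hi1.const_mul _) (hi2.const_mul _), integral_const_mul,
    integral_const_mul] at h0
  linarith

lemma cc_key (n : ℕ) :
    ∫ x in Ioi (1 / 4 : ℝ), Real.sqrt (4 * x - 1) * x ^ (-(n : ℝ) - 2)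
      = 2 * π * ((Nat.choose (2 * n) n : ℝ) / ((n : ℝ) + 1)) := by
  induction n with
  | zero => simpa using cc_base
  | succ n ih =>
    have hrec := cc_rec n
    rw [ih] at hrec
    have hn1 : ((n : ℝ) + 1) ≠ 0 := by positivity
    have hn2 : ((n : ℝ) + 2) ≠ 0 := by positivity
    have hcb : ((n : ℝ) + 1) * ((2 * (n + 1)).choose (n + 1) : ℝ)
        = 2 * (2 * (n : ℝ) + 1) * ((2 * n).choose n : ℝ) := by
      have := Nat.succ_mul_centralBinom_succ n
      rw [Nat.centralBinom_eq_two_mul_choose, Nat.centralBinom_eq_two_mul_choose] at this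
      exact_mod_cast this
    have hgoal : ∫ x in Ioi (1 / 4 : ℝ), Real.sqrt (4 * x - 1) * x ^ (-((n + 1 : ℕ) : ℝ) - 2)
        = ∫ x in Ioi (1 / 4 : ℝ), Real.sqrt (4 * x - 1) * x ^ (-((n : ℝ) + 1) - 2) := by
      push_cast
      rfl
    rw [hgoal]
    have h1 : ∫ x in Ioi (1 / 4 : ℝ), Real.sqrt (4 * x - 1) * x ^ (-((n : ℝ) + 1) - 2)
        = (4 * (n : ℝ) + 2) * (2 * π * ((2 * n).choose n / ((n : ℝ) + 1))) / ((n : ℝ) + 2) := by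
      field_simp at hrec ⊢
      linarith
    rw [h1]
    push_cast
    field_simp
    linear_combination (-1) * ((n : ℝ) + 2) * hcb



/-- For every natural number `n` (i.e. every integer `n > −1/2`), the Catalan
number `C_n` is given by the cut integral
`C_n = (1/2π) ∫_{1/4}^∞ sqrt(4x−1) x^{−n−2} dx = (1/(n+1)) binom(2n,n)`. -/
theorem catalan_cut_integral (n : ℕ) :
    (1 / (2 * Real.pi)) *
        ∫ x in Set.Ioi (1 / 4 : ℝ), Real.sqrt (4 * x - 1) * x ^ (-(n : ℝ) - 2) =
      (Nat.choose (2 * n) n : ℝ) / ((n : ℝ) + 1) := by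
  rw [cc_key n]
  field_simp
end

section
/- For every natural number n, ∫_{−2}^{2} x^{2n} · sqrt(4 − x^2) dx / (2π) = C_n, the n-th Catalan number. -/
open Real Finset intervalIntegral

private lemma my_integral_cos_pow_even (n : ℕ) :
    (∫ x in (0:ℝ)..π, Real.cos x ^ (2 * n)) =
      π * ∏ i ∈ Finset.range n, (2 * (i : ℝ) + 1) / (2 * i + 2) := by
  induction' n with k ih
  · simp
  · rw [Finset.prod_range_succ_comm, mul_left_comm, ← ih, Nat.mul_succ, integral_cos_pow]
    norm_cast
    simp [-Nat.cast_add]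

private lemma my_prod_eq_centralBinom (n : ℕ) :
    (4 : ℝ) ^ n * ∏ i ∈ Finset.range n, (2 * (i : ℝ) + 1) / (2 * i + 2) =
      (Nat.centralBinom n : ℝ) := by
  induction' n with k ih
  · simp [Nat.centralBinom]
  · have h' : ((k : ℝ) + 1) * (Nat.centralBinom (k + 1) : ℝ)
        = 2 * (2 * k + 1) * (Nat.centralBinom k : ℝ) := by
      exact_mod_cast Nat.succ_mul_centralBinom_succ k
    have hk1 : ((k : ℝ) + 1) ≠ 0 := by positivity
    have hk2 : (2 * (k : ℝ) + 2) ≠ 0 := by positivity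
    rw [Finset.prod_range_succ]
    calc (4:ℝ) ^ (k+1) * ((∏ i ∈ Finset.range k, (2 * (i:ℝ) + 1) / (2 * i + 2))
            * ((2 * (k:ℝ) + 1) / (2 * k + 2)))
        = 4 * (((4:ℝ)^k * ∏ i ∈ Finset.range k, (2 * (i:ℝ) + 1) / (2 * i + 2))
            * ((2 * (k:ℝ) + 1) / (2 * k + 2))) := by ring
      _ = 4 * ((Nat.centralBinom k : ℝ) * ((2 * (k:ℝ) + 1) / (2 * k + 2))) := by rw [ih]
      _ = (Nat.centralBinom (k+1) : ℝ) := by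
          field_simp
          linear_combination (-2) * h'

/-- Moments of the semicircle density:
`∫_{−2}^{2} x^{2n} sqrt(4−x²) dx / (2π) = C_n`. -/
theorem semicircle_moments (n : ℕ) :
    (∫ x in (-2 : ℝ)..2, x ^ (2 * n) * Real.sqrt (4 - x ^ 2)) / (2 * Real.pi) =
      (catalan n : ℝ) := by
  have hg : Continuous fun x : ℝ => x ^ (2 * n) * Real.sqrt (4 - x ^ 2) := by fun_prop
  have hderiv : ∀ t ∈ Set.uIcc (0:ℝ) π,
      HasDerivAt (fun t : ℝ => -2 * Real.cos t) (2 * Real.sin t) t := by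
    intro t _
    simpa using (Real.hasDerivAt_cos t).const_mul (-2 : ℝ)
  have hsub := intervalIntegral.integral_comp_mul_deriv hderiv
    (by fun_prop : ContinuousOn (fun t : ℝ => 2 * Real.sin t) (Set.uIcc 0 π)) hg
  simp only [Real.cos_zero, Real.cos_pi, mul_one, mul_neg_one, neg_neg] at hsub
  have hcongr : (∫ t in (0:ℝ)..π,
        ((fun x : ℝ => x ^ (2 * n) * Real.sqrt (4 - x ^ 2)) ∘ fun t => -2 * Real.cos t) t
          * (2 * Real.sin t))
      = ∫ t in (0:ℝ)..π,
        (4:ℝ) ^ (n + 1) * (Real.cos t ^ (2 * n) - Real.cos t ^ (2 * (n + 1))) := by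
    apply intervalIntegral.integral_congr
    intro t ht
    rw [Set.uIcc_of_le Real.pi_pos.le] at ht
    have hs : 0 ≤ Real.sin t := Real.sin_nonneg_of_nonneg_of_le_pi ht.1 ht.2
    have hsin2 : Real.sin t ^ 2 = 1 - Real.cos t ^ 2 := Real.sin_sq t
    have hsq : Real.sqrt (4 - (-2 * Real.cos t) ^ 2) = 2 * Real.sin t := by
      have h4 : 4 - (-2 * Real.cos t) ^ 2 = (2 * Real.sin t) ^ 2 := by nlinarith [hsin2]
      rw [h4, Real.sqrt_sq (by positivity)]
    simp only [Function.comp_apply, hsq]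
    have hpow2 : ((-2 : ℝ)) ^ (2 * n) = 4 ^ n := by
      rw [pow_mul]; norm_num
    rw [mul_pow, hpow2, show 2 * (n + 1) = 2 * n + 2 from by ring, pow_add, pow_succ (4:ℝ)]
    linear_combination ((4:ℝ) ^ n * 4 * Real.cos t ^ (2 * n)) * hsin2
  rw [← hsub, hcongr, intervalIntegral.integral_const_mul,
    intervalIntegral.integral_sub (f := fun x => Real.cos x ^ (2 * n))
      (g := fun x => Real.cos x ^ (2 * (n + 1)))
      ((Real.continuous_cos.pow _).intervalIntegrable 0 π)
      ((Real.continuous_cos.pow _).intervalIntegrable 0 π),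
    my_integral_cos_pow_even n, my_integral_cos_pow_even (n + 1),
    Finset.prod_range_succ]
  have hB := my_prod_eq_centralBinom n
  have hC : ((n : ℝ) + 1) * (catalan n : ℝ) = (Nat.centralBinom n : ℝ) := by
    exact_mod_cast succ_mul_catalan_eq_centralBinom n
  have hpi : Real.pi ≠ 0 := Real.pi_ne_zero
  set A := ∏ i ∈ Finset.range n, (2 * (i : ℝ) + 1) / (2 * i + 2) with hA
  have hn1 : ((n : ℝ) + 1) ≠ 0 := by positivity
  have h2n2 : (2 * (n : ℝ) + 2) ≠ 0 := by positivity
  field_simp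
  linear_combination 4 * hB - 4 * hC
end
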